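/- arXiv:1512.09303 — 7 statements merged into one kernel-verified Lean document; each statement's English description precedes it below -/
import Mathlib

section
/- Let X be a nonempty compact Hausdorff space and E a commutative Banach algebra with unit. Then C(X,E) is a Ditkin algebra if and only if E is a Ditkin algebra. -/
open WeakDual

/-- For a commutative Banach algebra `A` (over `ℂ`) and a character `φ`, `Jset A φ` is the ideal
`J_φ` of elements whose Gelfand transform vanishes on a neighbourhood of `φ` in the character
space `M(A)` (with the weak-star topology). -/
def Jset (A : Type*) [NormedCommRing A] [NormedAlgebra ℂ A]
    (φ : characterSpace ℂ A) : Set A :=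
  {a : A | ∀ᶠ χ in nhds φ, χ a = 0}

/-- `A` is a Ditkin algebra: for every character `φ` and every `a` with `â(φ) = 0`
(i.e. `a ∈ I_φ`), `a` lies in the closure of `a • J_φ`. -/
def IsDitkinAlgebra (A : Type*) [NormedCommRing A] [NormedAlgebra ℂ A] : Prop :=
  ∀ (φ : characterSpace ℂ A) (a : A), φ a = 0 → a ∈ closure ((a * ·) '' Jset A φ)

/-- `A` has bounded relative units: for every character `φ` there is `m > 0` such that for
every compact `K ⊆ M(A) \ {φ}` there is `a ∈ J_φ` with `â = 1` on `K` and `‖a‖ ≤ m`. -/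
def HasBoundedRelativeUnits (A : Type*) [NormedCommRing A] [NormedAlgebra ℂ A] : Prop :=
  ∀ φ : characterSpace ℂ A, ∃ m : ℝ, 0 < m ∧
    ∀ K : Set (characterSpace ℂ A), IsCompact K → φ ∉ K →
      ∃ a ∈ Jset A φ, (∀ χ ∈ K, χ a = 1) ∧ ‖a‖ ≤ m

/-- `A` is a strong Ditkin algebra: for each character `φ`, the maximal ideal
`I_φ = {a | â(φ) = 0}` has a bounded approximate identity contained in `J_φ`. -/
def IsStrongDitkinAlgebra (A : Type*) [NormedCommRing A] [NormedAlgebra ℂ A] : Prop :=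
  ∀ φ : characterSpace ℂ A, ∃ m : ℝ, 0 < m ∧ ∃ u : ℕ → A,
    (∀ n, u n ∈ Jset A φ ∧ ‖u n‖ ≤ m) ∧
    ∀ a : A, φ a = 0 →
      Filter.Tendsto (fun n => ‖a - a * u n‖) Filter.atTop (nhds 0)

/-- `A` is semisimple: the Gelfand transform is injective, i.e. an element annihilated by all
characters is zero. -/
def IsSemisimple (A : Type*) [NormedCommRing A] [NormedAlgebra ℂ A] : Prop :=
  ∀ a : A, (∀ φ : characterSpace ℂ A, φ a = 0) → a = 0

/-- An admissible quadruple `(X, E, B, B̃)`: `X` is a compact Hausdorff space, `E` a commutative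
unital Banach algebra, `B` a natural `ℂ`-valued function algebra on `X` (realised by an injective
unital algebra embedding `incB : B →ₐ[ℂ] C(X, ℂ)` with continuous point evaluations, separating
points, and every character of `B` given by evaluation at a point of `X`), `B̃` an `E`-valued
function algebra on `X` (realised via `incT : B̃ →ₐ[ℂ] C(X, E)`; note that the constant
function `1_E` is automatically in the image, being the image of `1`), such that
`B·E ⊆ B̃` and `{λ ∘ f : f ∈ B̃, λ ∈ M(E)} ⊆ B`. -/
structure AdmissibleQuadruple
    (X : Type*) [TopologicalSpace X] [CompactSpace X] [T2Space X]
    (E : Type*) [NormedCommRing E] [NormedAlgebra ℂ E] [CompleteSpace E]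
    (B : Type*) [NormedCommRing B] [NormedAlgebra ℂ B] [CompleteSpace B]
    (Bt : Type*) [NormedCommRing Bt] [NormedAlgebra ℂ Bt] [CompleteSpace Bt] where
  incB : B →ₐ[ℂ] C(X, ℂ)
  incB_injective : Function.Injective incB
  incB_eval_continuous : ∀ x : X, Continuous fun g : B => incB g x
  incB_separates : ∀ x y : X, x ≠ y → ∃ g : B, incB g x ≠ incB g y
  natB : ∀ χ : characterSpace ℂ B, ∃ x : X, ∀ g : B, χ g = incB g x
  incT : Bt →ₐ[ℂ] C(X, E)
  incT_injective : Function.Injective incT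
  incT_eval_continuous : ∀ x : X, Continuous fun f : Bt => incT f x
  incT_separates : ∀ x y : X, x ≠ y → ∃ f : Bt, incT f x ≠ incT f y
  smul_mem : ∀ (g : B) (a : E), ∃ f : Bt, ∀ x : X, incT f x = incB g x • a
  comp_mem : ∀ (ψ : characterSpace ℂ E) (f : Bt), ∃ g : B, ∀ x : X, incB g x = ψ (incT f x)

variable {X : Type*} [TopologicalSpace X] [CompactSpace X] [T2Space X]
  {E : Type*} [NormedCommRing E] [NormedAlgebra ℂ E] [CompleteSpace E]
  {B : Type*} [NormedCommRing B] [NormedAlgebra ℂ B] [CompleteSpace B]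
  {Bt : Type*} [NormedCommRing Bt] [NormedAlgebra ℂ Bt] [CompleteSpace Bt]

/-- An admissible quadruple is natural if the associated map
`β : X × M(E) → M(B̃)`, `(x, ψ) ↦ ψ ∘ e_x`, is bijective; equivalently, every character of `B̃`
has a unique representation `f ↦ ψ ((incT f) x)`. -/
def AdmissibleQuadruple.IsNatural (Q : AdmissibleQuadruple X E B Bt) : Prop :=
  ∀ φ : characterSpace ℂ Bt, ∃! p : X × characterSpace ℂ E,
    ∀ f : Bt, φ f = p.2 (Q.incT f p.1)

/-- An admissible quadruple is tight if for each `f ∈ B̃` the `B`-valued map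
`λ ↦ λ ∘ f` on `M(E)` is continuous (from the weak-star topology to the norm of `B`). -/
def AdmissibleQuadruple.IsTight (Q : AdmissibleQuadruple X E B Bt) : Prop :=
  ∀ f : Bt, ∃ h : C(characterSpace ℂ E, B),
    ∀ (ψ : characterSpace ℂ E) (x : X), Q.incB (h ψ) x = ψ (Q.incT f x)


set_option linter.unusedSectionVars false
section DitkinAux

variable {Y : Type*} [TopologicalSpace Y] [CompactSpace Y] [T2Space Y]
  {A : Type*} [NormedCommRing A] [NormedAlgebra ℂ A] [CompleteSpace A]

/-- The constant embedding `A →L[ℂ] C(Y, A)`. -/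
noncomputable def DitkinAux.constCLM (Y : Type*) [TopologicalSpace Y] [CompactSpace Y]
    (A : Type*) [NormedCommRing A] [NormedAlgebra ℂ A] : A →L[ℂ] C(Y, A) :=
  LinearMap.mkContinuous
    { toFun := fun a => ContinuousMap.const Y a
      map_add' := fun a b => by ext y; simp
      map_smul' := fun c a => by ext y; simp } 1
    (fun a => by
      simpa using (ContinuousMap.norm_le (ContinuousMap.const Y a) (norm_nonneg a)).2
        (fun y => le_rfl))

@[simp] lemma DitkinAux.constCLM_apply (a : A) (y : Y) :
    DitkinAux.constCLM Y A a y = a := rfl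

/-- Scalar-valued continuous functions inside `C(Y, A)`. -/
noncomputable def DitkinAux.theta (Y : Type*) [TopologicalSpace Y] [CompactSpace Y]
    (A : Type*) [NormedCommRing A] [NormedAlgebra ℂ A] : C(Y, ℂ) →ₐ[ℂ] C(Y, A) :=
  AlgHom.compLeftContinuous ℂ (Algebra.ofId ℂ A) (continuous_algebraMap ℂ A)

@[simp] lemma DitkinAux.theta_apply (k : C(Y, ℂ)) (y : Y) :
    DitkinAux.theta Y A k y = algebraMap ℂ A (k y) := by
  simp [DitkinAux.theta, Algebra.ofId_apply]
  rfl

namespace DitkinAux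

/-- Evaluation characters of `C(Y, A)`. -/
noncomputable def evalChar (x : Y) (ψ : characterSpace ℂ A) :
    characterSpace ℂ C(Y, A) := by
  refine ⟨((CharacterSpace.toCLM ψ).comp (ContinuousMap.evalCLM ℂ x) :
      WeakDual ℂ C(Y, A)), ?_, ?_⟩
  · intro h
    have h1 : ψ ((1 : C(Y, A)) x) = 0 := congrFun (congrArg DFunLike.coe h) 1
    simp at h1
  · intro f g
    show ψ ((f * g) x) = ψ (f x) * ψ (g x)
    rw [ContinuousMap.mul_apply, map_mul]

@[simp] lemma evalChar_apply (x : Y) (ψ : characterSpace ℂ A) (f : C(Y, A)) :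
    evalChar x ψ f = ψ (f x) := rfl

lemma continuous_evalChar (x : Y) :
    Continuous (fun ψ : characterSpace ℂ A => evalChar (Y := Y) x ψ) := by
  apply Continuous.subtype_mk
  apply WeakDual.continuous_of_continuous_eval
  intro f
  exact (WeakDual.eval_continuous (f x)).comp continuous_subtype_val

/-- The character of `A` obtained from a character of `C(Y, A)` via constants. -/
noncomputable def pi2 (φ : characterSpace ℂ C(Y, A)) : characterSpace ℂ A := by
  refine ⟨((CharacterSpace.toCLM φ).comp (constCLM Y A) : WeakDual ℂ A), ?_, ?_⟩
  · intro h
    have h1 : φ (ContinuousMap.const Y (1 : A)) = 0 := congrFun (congrArg DFunLike.coe h) 1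
    have : ContinuousMap.const Y (1 : A) = (1 : C(Y, A)) := rfl
    rw [this, map_one] at h1
    exact one_ne_zero h1
  · intro a b
    show φ (ContinuousMap.const Y (a * b)) = _
    have : ContinuousMap.const Y (a * b)
        = ContinuousMap.const Y a * ContinuousMap.const Y b := rfl
    rw [this, map_mul]
    rfl

@[simp] lemma pi2_apply (φ : characterSpace ℂ C(Y, A)) (a : A) :
    pi2 φ a = φ (ContinuousMap.const Y a) := rfl

lemma continuous_pi2 :
    Continuous (fun φ : characterSpace ℂ C(Y, A) => pi2 φ) := by
  apply Continuous.subtype_mk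
  apply WeakDual.continuous_of_continuous_eval
  intro a
  exact (WeakDual.eval_continuous (ContinuousMap.const Y a)).comp continuous_subtype_val

/-- Every character of `C(Y, ℂ)` (as an algebra hom) is a point evaluation. -/
lemma algHom_exists_eval [Nonempty Y] (χ : C(Y, ℂ) →ₐ[ℂ] ℂ) :
    ∃ x : Y, ∀ k : C(Y, ℂ), χ k = k x := by
  have key : ∃ x : Y, ∀ k : C(Y, ℂ), χ k = 0 → k x = 0 := by
    by_contra hcon
    push_neg at hcon
    choose k hk0 hkx using hcon
    have hcover : (Set.univ : Set Y) ⊆ ⋃ x : Y, {y | k x y ≠ 0} := fun y _ =>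
      Set.mem_iUnion.2 ⟨y, hkx y⟩
    obtain ⟨t, ht⟩ := isCompact_univ.elim_finite_subcover
      (fun x : Y => {y | k x y ≠ 0})
      (fun x => isOpen_ne.preimage (k x).continuous) hcover
    set h : C(Y, ℂ) := ∑ x ∈ t, star (k x) * k x with hh
    have hχh : χ h = 0 := by
      rw [hh, map_sum]
      refine Finset.sum_eq_zero fun x _ => ?_
      rw [map_mul, hk0 x, mul_zero]
    have hne : ∀ y : Y, h y ≠ 0 := by
      intro y
      obtain ⟨x, hxm⟩ := Set.mem_iUnion₂.1 (ht (Set.mem_univ y))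
      obtain ⟨hxt, hky⟩ := hxm
      have hval : h y = ∑ x ∈ t, ((starRingEnd ℂ) (k x y)) * k x y := by
        simp [hh]
      rw [hval]
      have hsum : ∑ x ∈ t, ((starRingEnd ℂ) (k x y)) * k x y
          = ((∑ x ∈ t, Complex.normSq (k x y) : ℝ) : ℂ) := by
        push_cast
        refine Finset.sum_congr rfl fun x _ => ?_
        rw [Complex.normSq_eq_conj_mul_self]
      rw [hsum]
      have hpos : 0 < ∑ x ∈ t, Complex.normSq (k x y) :=
        Finset.sum_pos' (fun x _ => Complex.normSq_nonneg _)
          ⟨x, hxt, Complex.normSq_pos.2 hky⟩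
      exact_mod_cast hpos.ne'
    set hinv : C(Y, ℂ) := ⟨fun y => (h y)⁻¹, h.continuous.inv₀ hne⟩ with hhinv
    have : (1 : ℂ) = 0 := by
      have h1 : h * hinv = 1 := by
        ext y
        exact mul_inv_cancel₀ (hne y)
      calc (1 : ℂ) = χ (h * hinv) := by rw [h1, map_one]
        _ = χ h * χ hinv := map_mul χ _ _
        _ = 0 := by rw [hχh, zero_mul]
    exact one_ne_zero this
  obtain ⟨x, hx⟩ := key
  refine ⟨x, fun k => ?_⟩
  have h0 : χ (k - algebraMap ℂ C(Y, ℂ) (χ k)) = 0 := by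
    simp
  have := hx _ h0
  have h2 : (k - algebraMap ℂ C(Y, ℂ) (χ k)) x = k x - χ k := by
    simp
  rw [h2, sub_eq_zero] at this
  exact this.symm

/-- Every character of `C(Y, A)` is of the form `f ↦ ψ (f x)`. -/
lemma char_rep [Nonempty Y] (φ : characterSpace ℂ C(Y, A)) :
    ∃ x : Y, ∀ f : C(Y, A), φ f = pi2 φ (f x) := by
  obtain ⟨x, hx⟩ := algHom_exists_eval ((CharacterSpace.toAlgHom φ).comp (theta Y A))
  have hx' : ∀ k : C(Y, ℂ), φ (theta Y A k) = k x := fun k => hx k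
  refine ⟨x, fun f => ?_⟩
  rw [pi2_apply, ← sub_eq_zero, ← map_sub]
  set d : C(Y, A) := f - ContinuousMap.const Y (f x) with hd
  have hdx : d x = 0 := by simp [hd]
  set C := ‖CharacterSpace.toCLM φ‖ with hC
  have key : ∀ ε : ℝ, 0 < ε → ‖φ d‖ ≤ C * ε := by
    intro ε hε
    set U := {y : Y | ‖d y‖ < ε} with hU
    have hUopen : IsOpen U := isOpen_lt d.continuous.norm continuous_const
    have hxU : x ∈ U := by simp [hU, hdx, hε]
    obtain ⟨kR, hk0, hk1, hk01⟩ := exists_continuous_zero_one_of_isClosed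
      (isClosed_compl_iff.2 hUopen) (isClosed_singleton (x := x))
      (Set.disjoint_left.2 fun y hy (hy' : y = x) => hy (by simpa [hy'] using hxU))
    set kC : C(Y, ℂ) := ⟨fun y => (kR y : ℂ), Complex.continuous_ofReal.comp kR.continuous⟩
      with hkC
    have hkx : kC x = 1 := by
      have := hk1 (Set.mem_singleton x)
      simp only [hkC, ContinuousMap.coe_mk]
      rw [show kR x = 1 from this]
      norm_num
    have hmul : φ d = φ (d * theta Y A kC) := by
      rw [map_mul, hx' kC, hkx, mul_one]
    have hnorm : ‖d * theta Y A kC‖ ≤ ε := by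
      rw [ContinuousMap.norm_le _ hε.le]
      intro y
      have happ : (d * theta Y A kC) y = (kR y : ℂ) • d y := by
        rw [ContinuousMap.mul_apply, theta_apply, Algebra.algebraMap_eq_smul_one,
          mul_smul_comm, mul_one]
        rfl
      rw [happ, norm_smul]
      by_cases hy : y ∈ U
      · have h1 : ‖((kR y : ℝ) : ℂ)‖ ≤ 1 := by
          rw [Complex.norm_real]
          exact abs_le.2 ⟨by linarith [(hk01 y).1], (hk01 y).2⟩
        calc ‖((kR y : ℝ) : ℂ)‖ * ‖d y‖ ≤ 1 * ε :=
              mul_le_mul h1 (le_of_lt hy) (norm_nonneg _) one_pos.le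
          _ = ε := one_mul ε
      · have h0 : kR y = 0 := hk0 hy
        simp [h0, hε.le]
    calc ‖φ d‖ = ‖φ (d * theta Y A kC)‖ := by rw [← hmul]
      _ = ‖CharacterSpace.toCLM φ (d * theta Y A kC)‖ := rfl
      _ ≤ C * ‖d * theta Y A kC‖ := (CharacterSpace.toCLM φ).le_opNorm _
      _ ≤ C * ε := mul_le_mul_of_nonneg_left hnorm (norm_nonneg _)
  have hle : ‖φ d‖ ≤ 0 := by
    by_contra hpos
    push_neg at hpos
    have hC0 : 0 ≤ C := norm_nonneg _
    have hb := key (‖φ d‖ / (2 * (C + 1))) (by positivity)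
    have hlt : C * (‖φ d‖ / (2 * (C + 1))) < ‖φ d‖ := by
      rw [mul_div_assoc', div_lt_iff₀ (by positivity)]
      nlinarith
    linarith
  exact norm_le_zero_iff.1 hle

end DitkinAux

end DitkinAux

open DitkinAux

/-- For a nonempty compact Hausdorff space `X` and a commutative unital Banach
algebra `E`, the algebra `C(X, E)` (uniform norm) is Ditkin iff `E` is Ditkin. -/
theorem isDitkinAlgebra_continuousMap_iff
    (X : Type*) [TopologicalSpace X] [CompactSpace X] [T2Space X] [Nonempty X]
    (E : Type*) [NormedCommRing E] [NormedAlgebra ℂ E] [CompleteSpace E] :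
    IsDitkinAlgebra C(X, E) ↔ IsDitkinAlgebra E := by
  constructor
  · -- C(X, E) Ditkin → E Ditkin
    intro hCX ψ a ha
    obtain ⟨x⟩ := ‹Nonempty X›
    have hφa : evalChar x ψ (ContinuousMap.const X a) = 0 := by
      show ψ (ContinuousMap.const X a x) = 0
      simpa using ha
    have hmem := hCX (evalChar x ψ) (ContinuousMap.const X a) hφa
    have hcont : Continuous fun f : C(X, E) => f x := continuous_eval_const x
    have himg := (image_closure_subset_closure_image hcont)
      (Set.mem_image_of_mem _ hmem)
    have ha' : a ∈ closure ((fun f : C(X, E) => f x) ''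
        ((ContinuousMap.const X a * ·) '' Jset C(X, E) (evalChar x ψ))) := by
      simpa using himg
    refine closure_mono ?_ ha'
    rintro z ⟨w, ⟨g, hg, rfl⟩, rfl⟩
    refine ⟨g x, ?_, by simp⟩
    have := ((continuous_evalChar (A := E) x).tendsto ψ).eventually hg
    exact this.mono fun ψ' h' => h'
  · -- E Ditkin → C(X, E) Ditkin
    intro hE φ a haφ
    obtain ⟨x₀, hrep⟩ := char_rep φ
    set ψ := pi2 φ with hψdef
    have hψb : ψ (a x₀) = 0 := (hrep a).symm.trans haφ
    rw [Metric.mem_closure_iff]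
    intro ε hε
    obtain ⟨c, hcmem, hbc⟩ :=
      Metric.mem_closure_iff.1 (hE ψ (a x₀) hψb) (ε / 4) (by positivity)
    obtain ⟨u, hu, rfl⟩ := hcmem
    have hb2 : ‖a x₀ - a x₀ * u‖ < ε / 4 := by rw [← dist_eq_norm]; exact hbc
    set M := ‖(1 : E)‖ + ‖u‖ + 1 with hM
    have hM0 : 0 < M := by positivity
    set W := {y : X | ‖a y - a x₀‖ < ε / (4 * M)} with hW
    have hWopen : IsOpen W :=
      isOpen_lt (Continuous.norm (a.continuous.sub continuous_const)) continuous_const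
    have hx₀W : x₀ ∈ W := by
      simp only [hW, Set.mem_setOf_eq, sub_self, norm_zero]
      positivity
    obtain ⟨V, hVopen, hx₀V, hVW⟩ := normal_exists_closure_subset
      (isClosed_singleton (x := x₀)) hWopen (Set.singleton_subset_iff.2 hx₀W)
    have hx₀V' : x₀ ∈ V := hx₀V rfl
    obtain ⟨k, hk0, hk1, hk01⟩ := exists_continuous_zero_one_of_isClosed
      isClosed_closure (isClosed_compl_iff.2 hWopen)
      (Set.disjoint_left.2 fun y hy hy2 => hy2 (hVW hy))
    obtain ⟨l, hl0, hl1, hl01⟩ := exists_continuous_zero_one_of_isClosed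
      (isClosed_compl_iff.2 hVopen) (isClosed_singleton (x := x₀))
      (Set.disjoint_left.2 fun y hy (h2 : y = x₀) => hy (h2 ▸ hx₀V'))
    set g : C(X, E) := ⟨fun y => u + ((k y : ℝ) : ℂ) • (1 - u),
      continuous_const.add
        ((Complex.continuous_ofReal.comp k.continuous).smul continuous_const)⟩ with hgdef
    have hgmem : g ∈ Jset C(X, E) φ := by
      set lC : C(X, ℂ) := ⟨fun y => ((l y : ℝ) : ℂ),
        Complex.continuous_ofReal.comp l.continuous⟩ with hlC
      have hFcont : Continuous fun χ : characterSpace ℂ C(X, E) => χ (theta X E lC) :=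
        (WeakDual.eval_continuous _).comp continuous_subtype_val
      have hlx0 : l x₀ = 1 := hl1 rfl
      have hFφ : φ (theta X E lC) = 1 := by
        rw [hrep (theta X E lC)]
        have h1 : (theta X E lC) x₀ = algebraMap ℂ E (lC x₀) := theta_apply _ _
        rw [h1, AlgHomClass.commutes]
        have h2 : lC x₀ = 1 := by
          show ((l x₀ : ℝ) : ℂ) = 1
          rw [hlx0]; norm_num
        rw [h2, map_one]
      have h2 : ∀ᶠ χ in nhds φ, χ (theta X E lC) ≠ 0 :=
        hFcont.continuousAt.eventually_ne (by rw [hFφ]; exact one_ne_zero)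
      have h1 : ∀ᶠ χ in nhds φ, pi2 χ u = 0 :=
        ((continuous_pi2).tendsto φ).eventually (hψdef ▸ hu)
      filter_upwards [h1, h2] with χ hχ1 hχ2
      obtain ⟨x', hx'⟩ := char_rep χ
      have hθ : χ (theta X E lC) = lC x' := by
        rw [hx' (theta X E lC)]
        have h3 : (theta X E lC) x' = algebraMap ℂ E (lC x') := theta_apply _ _
        rw [h3, AlgHomClass.commutes]
        simp
      have hlx' : lC x' ≠ 0 := fun h0 => hχ2 (by rw [hθ, h0])
      have hx'V : x' ∈ V := by
        by_contra hxv
        apply hlx'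
        show ((l x' : ℝ) : ℂ) = 0
        rw [show l x' = 0 from hl0 hxv]
        norm_num
      have hkx' : k x' = 0 := hk0 (subset_closure hx'V)
      have hgx' : g x' = u := by
        show u + ((k x' : ℝ) : ℂ) • (1 - u) = u
        rw [hkx']
        norm_num
      rw [hx' g, hgx']
      exact hχ1
    refine ⟨a * g, ⟨g, hgmem, rfl⟩, ?_⟩
    rw [dist_eq_norm]
    have h1u : ‖(1 : E) - u‖ ≤ M := by
      calc ‖(1 : E) - u‖ ≤ ‖(1 : E)‖ + ‖u‖ := norm_sub_le _ _
        _ ≤ M := by rw [hM]; linarith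
    have hbound : ‖a - a * g‖ ≤ ε / 2 := by
      rw [ContinuousMap.norm_le _ (by positivity)]
      intro y
      have heval : (a - a * g) y = (1 - ((k y : ℝ) : ℂ)) • (a y - a y * u) := by
        show a y - a y * (u + ((k y : ℝ) : ℂ) • (1 - u)) = _
        rw [mul_add, mul_smul_comm, mul_sub, mul_one, sub_smul, one_smul]
        abel
      rw [heval, norm_smul]
      by_cases hyW : y ∈ W
      · have h1k : ‖(1 - ((k y : ℝ) : ℂ))‖ ≤ 1 := by
          rw [show (1 - ((k y : ℝ) : ℂ)) = (((1 - k y : ℝ)) : ℂ) by push_cast; ring,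
            Complex.norm_real, Real.norm_eq_abs, abs_le]
          constructor <;> linarith [(hk01 y).1, (hk01 y).2]
        have hyW' : ‖a y - a x₀‖ ≤ ε / (4 * M) := le_of_lt hyW
        have h2k : ‖a y - a y * u‖ ≤ ε / 2 := by
          have hdecomp : a y - a y * u = (a y - a x₀) * (1 - u) + (a x₀ - a x₀ * u) := by
            ring
          rw [hdecomp]
          calc ‖(a y - a x₀) * (1 - u) + (a x₀ - a x₀ * u)‖
              ≤ ‖(a y - a x₀) * (1 - u)‖ + ‖a x₀ - a x₀ * u‖ := norm_add_le _ _
            _ ≤ ‖a y - a x₀‖ * ‖(1 : E) - u‖ + ε / 4 :=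
                add_le_add (norm_mul_le _ _) hb2.le
            _ ≤ (ε / (4 * M)) * M + ε / 4 := by gcongr
            _ = ε / 2 := by field_simp; ring
        calc ‖(1 - ((k y : ℝ) : ℂ))‖ * ‖a y - a y * u‖ ≤ 1 * (ε / 2) :=
              mul_le_mul h1k h2k (norm_nonneg _) one_pos.le
          _ = ε / 2 := one_mul _
      · have hky : k y = 1 := hk1 hyW
        have hz : (1 - ((k y : ℝ) : ℂ)) = 0 := by rw [hky]; norm_num
        rw [hz, norm_zero, zero_mul]
        positivity
    calc ‖a - a * g‖ ≤ ε / 2 := hbound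
      _ < ε := by linarith
end

section
/- Let X be a nonempty compact Hausdorff space and E a commutative Banach algebra with unit. If E is a Ditkin algebra, then C(X,E) is a Ditkin algebra. -/
open WeakDual

variable {X : Type*} [TopologicalSpace X] [CompactSpace X] [T2Space X]
  {E : Type*} [NormedCommRing E] [NormedAlgebra ℂ E] [CompleteSpace E]
  {B : Type*} [NormedCommRing B] [NormedAlgebra ℂ B] [CompleteSpace B]
  {Bt : Type*} [NormedCommRing Bt] [NormedAlgebra ℂ Bt] [CompleteSpace Bt]

/-! ### Auxiliary machinery for Statement 1 -/

section DitkinAux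

open WeakDual.CharacterSpace ContinuousMap

variable (X E) in
/-- The embedding of scalar-valued functions into `E`-valued functions. -/
noncomputable def scalarIncl : C(X, ℂ) →ₐ[ℂ] C(X, E) :=
  AlgHom.compLeftContinuous ℂ (Algebra.ofId ℂ E) (continuous_algebraMap ℂ E)

lemma scalarIncl_apply (g : C(X, ℂ)) (x : X) :
    scalarIncl X E g x = algebraMap ℂ E (g x) := rfl

variable (X E) in
/-- The embedding of `E` as constant functions. -/
def constIncl : E →ₐ[ℂ] C(X, E) where
  toFun e := ContinuousMap.const X e
  map_one' := rfl
  map_mul' _ _ := rfl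
  map_zero' := rfl
  map_add' _ _ := rfl
  commutes' _ := rfl

lemma constIncl_apply (e : E) (x : X) : constIncl X E e x = e := rfl

/-- The `E`-character associated to a character of `C(X, E)`. -/
noncomputable def charE (χ : characterSpace ℂ C(X, E)) : characterSpace ℂ E :=
  equivAlgHom.symm ((equivAlgHom χ).comp (constIncl X E))

lemma charE_apply (χ : characterSpace ℂ C(X, E)) (e : E) :
    charE χ e = χ (constIncl X E e) := rfl

/-- The point of `X` associated to a character of `C(X, E)`. -/
noncomputable def charPt (χ : characterSpace ℂ C(X, E)) : X :=
  (homeoEval X ℂ).symm (equivAlgHom.symm ((equivAlgHom χ).comp (scalarIncl X E)))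

lemma charPt_spec (χ : characterSpace ℂ C(X, E)) (g : C(X, ℂ)) :
    χ (scalarIncl X E g) = g (charPt χ) := by
  have h := (homeoEval X ℂ).apply_symm_apply
    (equivAlgHom.symm ((equivAlgHom χ).comp (scalarIncl X E)))
  calc χ (scalarIncl X E g)
      = (equivAlgHom.symm ((equivAlgHom χ).comp (scalarIncl X E))) g := rfl
    _ = ((homeoEval X ℂ) (charPt χ)) g := by unfold charPt; rw [h]
    _ = g (charPt χ) := rfl

lemma continuous_charE :
    Continuous (charE : characterSpace ℂ C(X, E) → characterSpace ℂ E) := by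
  apply continuous_induced_rng.mpr
  apply WeakDual.continuous_of_continuous_eval
  intro e
  exact (WeakDual.eval_continuous (constIncl X E e)).comp continuous_subtype_val

lemma continuous_charPt :
    Continuous (charPt : characterSpace ℂ C(X, E) → X) := by
  refine ((homeoEval X ℂ).symm.continuous).comp ?_
  apply continuous_induced_rng.mpr
  apply WeakDual.continuous_of_continuous_eval
  intro g
  exact (WeakDual.eval_continuous (scalarIncl X E g)).comp continuous_subtype_val

lemma char_eq_zero_of_eventually (χ : characterSpace ℂ C(X, E)) {f : C(X, E)}
    (h : ∀ᶠ x in nhds (charPt χ), f x = 0) : χ f = 0 := by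
  obtain ⟨U, hUsub, hUopen, hxU⟩ := mem_nhds_iff.mp h
  obtain ⟨g, hg0, hg1, -⟩ := exists_continuous_zero_one_of_isClosed
    (isClosed_compl_iff.mpr hUopen) (isClosed_singleton (x := charPt χ))
    (Set.disjoint_singleton_right.mpr (by simp [hxU]))
  set gc : C(X, ℂ) := (ContinuousMap.mk Complex.ofReal Complex.continuous_ofReal).comp g with hgc
  have hmul : scalarIncl X E gc * f = 0 := by
    ext x
    by_cases hx : x ∈ U
    · have : f x = 0 := hUsub hx
      simp [this]
    · have hgx : g x = 0 := hg0 hx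
      simp [scalarIncl_apply, hgc, hgx]
  have h1 : χ (scalarIncl X E gc) = 1 := by
    rw [charPt_spec]
    have : g (charPt χ) = 1 := hg1 rfl
    simp [hgc, this]
  have := map_mul χ (scalarIncl X E gc) f
  rw [hmul, map_zero, h1, one_mul] at this
  exact this.symm

lemma char_eq_zero_of_apply (χ : characterSpace ℂ C(X, E)) {f : C(X, E)}
    (h : f (charPt χ) = 0) : χ f = 0 := by
  have key : ∀ ε > (0 : ℝ), ‖χ f‖ ≤ ‖toCLM χ‖ * ε := by
    intro ε hε
    set U : Set X := {x : X | ‖f x‖ < ε} with hU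
    have hUopen : IsOpen U := isOpen_lt (continuous_norm.comp f.continuous) continuous_const
    have hptU : charPt χ ∈ U := by simp [hU, h, hε]
    obtain ⟨K, hKcomp, hptK, hKU⟩ := exists_compact_subset hUopen hptU
    obtain ⟨g, hg0, hg1, hg01⟩ := exists_continuous_zero_one_of_isClosed
      hKcomp.isClosed (isClosed_compl_iff.mpr hUopen)
      (Set.disjoint_left.mpr fun x hxK hxc => hxc (hKU hxK))
    set gc : C(X, ℂ) := (ContinuousMap.mk Complex.ofReal Complex.continuous_ofReal).comp g with hgc
    have hzero : χ (scalarIncl X E gc * f) = 0 := by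
      apply char_eq_zero_of_eventually
      filter_upwards [isOpen_interior.mem_nhds hptK] with x hx
      have hgx : g x = 0 := hg0 (interior_subset hx)
      simp [scalarIncl_apply, hgc, hgx]
    have hsub : χ f = χ (f - scalarIncl X E gc * f) := by
      rw [map_sub, hzero, sub_zero]
    have hnorm : ‖f - scalarIncl X E gc * f‖ ≤ ε := by
      rw [ContinuousMap.norm_le _ hε.le]
      intro x
      have hval : (f - scalarIncl X E gc * f) x = (1 - gc x) • f x := by
        simp only [ContinuousMap.sub_apply, ContinuousMap.mul_apply, scalarIncl_apply,
          Algebra.smul_def, map_sub, map_one, sub_mul, one_mul]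
      rw [hval, norm_smul]
      by_cases hx : x ∈ U
      · have h1 : ‖(1 : ℂ) - gc x‖ ≤ 1 := by
          have := hg01 x
          simp only [hgc, ContinuousMap.comp_apply, ContinuousMap.coe_mk]
          rw [show ((1 : ℂ) - (g x : ℂ)) = ((1 - g x : ℝ) : ℂ) by push_cast; ring]
          rw [Complex.norm_real, Real.norm_eq_abs, abs_le]
          constructor <;> [linarith [this.2]; linarith [this.1]]
        calc ‖(1 : ℂ) - gc x‖ * ‖f x‖ ≤ 1 * ‖f x‖ := by
              apply mul_le_mul_of_nonneg_right h1 (norm_nonneg _)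
          _ = ‖f x‖ := one_mul _
          _ ≤ ε := (le_of_lt hx)
      · have hgx : g x = 1 := hg1 hx
        simp [hgc, hgx, hε.le]
    calc ‖χ f‖ = ‖toCLM χ (f - scalarIncl X E gc * f)‖ := by rw [hsub]; rfl
      _ ≤ ‖toCLM χ‖ * ‖f - scalarIncl X E gc * f‖ := (toCLM χ).le_opNorm _
      _ ≤ ‖toCLM χ‖ * ε := mul_le_mul_of_nonneg_left hnorm (norm_nonneg _)
  have hle : ∀ ε > (0 : ℝ), ‖χ f‖ ≤ ε := by
    intro ε hε
    have hpos : (0 : ℝ) < ‖toCLM χ‖ + 1 := by positivity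
    have h2 := key (ε / (‖toCLM χ‖ + 1)) (by positivity)
    calc ‖χ f‖ ≤ ‖toCLM χ‖ * (ε / (‖toCLM χ‖ + 1)) := h2
      _ ≤ (‖toCLM χ‖ + 1) * (ε / (‖toCLM χ‖ + 1)) := by
          apply mul_le_mul_of_nonneg_right (by linarith) (by positivity)
      _ = ε := mul_div_cancel₀ _ (ne_of_gt hpos)
  have : ‖χ f‖ ≤ 0 := le_of_forall_pos_le_add (by simpa using fun ε hε => hle ε hε)
  simpa using le_antisymm this (norm_nonneg _)

/-- Every character of `C(X, E)` factors as `f ↦ ψ (f x)`. -/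
lemma char_apply (χ : characterSpace ℂ C(X, E)) (f : C(X, E)) :
    χ f = charE χ (f (charPt χ)) := by
  have h : χ (f - constIncl X E (f (charPt χ))) = 0 := by
    apply char_eq_zero_of_apply
    simp [constIncl_apply]
  rw [map_sub, sub_eq_zero] at h
  rw [h, charE_apply]

end DitkinAux

/-- For a nonempty compact Hausdorff space `X` and a commutative unital Banach
algebra `E`, if `E` is a Ditkin algebra then so is `C(X, E)` (with the uniform norm). -/
theorem isDitkinAlgebra_continuousMap_of_isDitkinAlgebra
    (X : Type*) [TopologicalSpace X] [CompactSpace X] [T2Space X] [Nonempty X]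
    (E : Type*) [NormedCommRing E] [NormedAlgebra ℂ E] [CompleteSpace E]
    (hE : IsDitkinAlgebra E) :
    IsDitkinAlgebra C(X, E) := by
  intro φ a ha
  set x₀ := charPt φ with hx₀def
  have ha0 : charE φ (a x₀) = 0 := by rw [← char_apply]; exact ha
  rw [Metric.mem_closure_iff]
  intro ε hε
  have hDit := hE (charE φ) (a x₀) ha0
  rw [Metric.mem_closure_iff] at hDit
  obtain ⟨b, hb, hdistb⟩ := hDit (ε / 4) (by positivity)
  obtain ⟨v, hv, rfl⟩ := hb
  rw [dist_eq_norm] at hdistb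
  have hv' : ∀ᶠ ξ in nhds (charE φ), ξ v = 0 := hv
  set δ : ℝ := (ε / 4) / (‖1 - v‖ + 1) with hδdef
  have hδpos : 0 < δ := by positivity
  set N : Set X := {x | ‖a x - a x₀‖ < δ} with hNdef
  have hNopen : IsOpen N :=
    isOpen_lt (continuous_norm.comp (a.continuous.sub continuous_const)) continuous_const
  have hx₀N : x₀ ∈ N := by simp [hNdef, hδpos]
  obtain ⟨K, hKcomp, hx₀K, hKN⟩ := exists_compact_subset hNopen hx₀N
  obtain ⟨g, hg0, hg1, hg01⟩ := exists_continuous_zero_one_of_isClosed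
    (isClosed_compl_iff.mpr hNopen) hKcomp.isClosed
    (Set.disjoint_left.mpr fun x hxc hxK => hxc (hKN hxK))
  set gc : C(X, ℂ) := (ContinuousMap.mk Complex.ofReal Complex.continuous_ofReal).comp g with hgc
  set u : C(X, E) := 1 - scalarIncl X E gc * constIncl X E (1 - v) with hu
  have humem : u ∈ Jset C(X, E) φ := by
    have hev1 : ∀ᶠ χ in nhds φ, charPt χ ∈ interior K :=
      continuous_charPt.continuousAt.preimage_mem_nhds (isOpen_interior.mem_nhds hx₀K)
    have hev2 : ∀ᶠ χ in nhds φ, (charE χ) v = 0 :=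
      Filter.Tendsto.eventually continuous_charE.continuousAt hv'
    filter_upwards [hev1, hev2] with χ h1 h2
    have hgpt : gc (charPt χ) = 1 := by
      have := hg1 (interior_subset h1)
      simp [hgc, this]
    have hval : χ u = 1 - χ (scalarIncl X E gc) * χ (constIncl X E (1 - v)) := by
      rw [hu, map_sub, map_one, map_mul]
    rw [hval, charPt_spec, hgpt, ← charE_apply, map_sub, map_one, h2, sub_zero, one_mul,
      sub_self]
  refine ⟨a * u, ⟨u, humem, rfl⟩, ?_⟩
  rw [dist_eq_norm]
  have hrewrite : a - a * u = scalarIncl X E gc * (a * constIncl X E (1 - v)) := by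
    rw [hu]; ring
  rw [hrewrite, ContinuousMap.norm_lt_iff _ hε]
  intro x
  have hvalx : (scalarIncl X E gc * (a * constIncl X E (1 - v))) x
      = gc x • (a x * (1 - v)) := by
    simp [ContinuousMap.mul_apply, scalarIncl_apply, constIncl_apply, Algebra.smul_def]
  rw [hvalx, norm_smul]
  by_cases hx : x ∈ N
  · have hgle : ‖gc x‖ ≤ 1 := by
      have := hg01 x
      simp only [hgc, ContinuousMap.comp_apply, ContinuousMap.coe_mk, Complex.norm_real,
        Real.norm_eq_abs, abs_le]
      constructor <;> linarith [this.1, this.2]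
    have hdecomp : a x * (1 - v) = (a x - a x₀) * (1 - v) + (a x₀ - a x₀ * v) := by ring
    have hbound : ‖a x * (1 - v)‖ ≤ ‖a x - a x₀‖ * ‖1 - v‖ + ‖a x₀ - a x₀ * v‖ := by
      rw [hdecomp]
      exact (norm_add_le _ _).trans (by gcongr; exact norm_mul_le _ _)
    have hxN : ‖a x - a x₀‖ < δ := hx
    have h1 : ‖a x - a x₀‖ * ‖1 - v‖ ≤ ε / 4 := by
      calc ‖a x - a x₀‖ * ‖1 - v‖ ≤ δ * (‖1 - v‖ + 1) := by
            apply mul_le_mul hxN.le (by linarith) (norm_nonneg _) hδpos.le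
        _ = ε / 4 := by
            rw [hδdef, div_mul_cancel₀]
            positivity
    calc ‖gc x‖ * ‖a x * (1 - v)‖ ≤ 1 * (ε / 4 + ε / 4) := by
          apply mul_le_mul hgle (hbound.trans (by linarith)) (norm_nonneg _) zero_le_one
      _ < ε := by linarith
  · have hgx : g x = 0 := hg0 hx
    have : gc x = 0 := by simp [hgc, hgx]
    rw [this, norm_zero, zero_mul]
    exact hε
end

section
/- Let X be a nonempty compact Hausdorff space and E a commutative Banach algebra with unit. Then C(X,E) has bounded relative units if and only if E has bounded relative units. -/
open WeakDual

variable {X : Type*} [TopologicalSpace X] [CompactSpace X] [T2Space X]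
  {E : Type*} [NormedCommRing E] [NormedAlgebra ℂ E] [CompleteSpace E]
  {B : Type*} [NormedCommRing B] [NormedAlgebra ℂ B] [CompleteSpace B]
  {Bt : Type*} [NormedCommRing Bt] [NormedAlgebra ℂ Bt] [CompleteSpace Bt]

namespace BRU

open WeakDual.CharacterSpace Set Filter ContinuousMap

/-- The character of `C(X, E)` given by a point `x ∈ X` and a character `ψ` of `E`:
`f ↦ ψ (f x)`. -/
noncomputable def pairChar (x : X) (ψ : characterSpace ℂ E) : characterSpace ℂ C(X, E) :=
  equivAlgHom.symm ((toAlgHom ψ).comp (ContinuousMap.evalAlgHom ℂ E x))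

@[simp] lemma pairChar_apply (x : X) (ψ : characterSpace ℂ E) (f : C(X, E)) :
    pairChar x ψ f = ψ (f x) :=
  congrFun (equivAlgHom_symm_coe _) f

/-- Constants, as an algebra homomorphism `E →ₐ[ℂ] C(X, E)`. -/
noncomputable def constAlg : E →ₐ[ℂ] C(X, E) where
  toFun a := ContinuousMap.const X a
  map_one' := rfl
  map_mul' _ _ := rfl
  map_zero' := rfl
  map_add' _ _ := rfl
  commutes' _ := rfl

/-- Scalar-valued functions, included into `C(X, E)` via `algebraMap ℂ E`. -/
noncomputable def iota : C(X, ℂ) →ₐ[ℂ] C(X, E) :=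
  (Algebra.ofId ℂ E).compLeftContinuous ℂ
    (by show Continuous (algebraMap ℂ E); exact continuous_algebraMap ℂ E)

@[simp] lemma iota_apply (g : C(X, ℂ)) (y : X) :
    iota (E := E) g y = algebraMap ℂ E (g y) := rfl

/-- A real-valued continuous function, as a complex-valued one. -/
noncomputable def cplx (g : C(X, ℝ)) : C(X, ℂ) :=
  (⟨Complex.ofReal, Complex.continuous_ofReal⟩ : C(ℝ, ℂ)).comp g

@[simp] lemma cplx_apply (g : C(X, ℝ)) (y : X) : cplx g y = (g y : ℂ) := rfl

lemma continuous_eval_pair (f : C(X, E)) :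
    Continuous fun p : X × characterSpace ℂ E => p.2 (f p.1) := by
  rw [continuous_iff_continuousAt]
  rintro ⟨x₀, ψ₀⟩
  have h2 : Continuous fun p : X × characterSpace ℂ E => p.2 (f x₀) :=
    (WeakDual.eval_continuous (f x₀)).comp (continuous_subtype_val.comp continuous_snd)
  have h1 : Filter.Tendsto (fun p : X × characterSpace ℂ E => p.2 (f p.1 - f x₀))
      (nhds (x₀, ψ₀)) (nhds 0) := by
    apply squeeze_zero_norm
      (fun p : X × characterSpace ℂ E =>
        AlgHom.norm_apply_le_self_mul_norm_one p.2 (f p.1 - f x₀))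
    have hc : Continuous fun p : X × characterSpace ℂ E => ‖f p.1 - f x₀‖ * ‖(1 : E)‖ :=
      (((f.continuous.comp continuous_fst).sub continuous_const).norm).mul continuous_const
    have := hc.continuousAt (x := (x₀, ψ₀))
    unfold ContinuousAt at this
    simpa using this
  have h := h1.add h2.continuousAt
  rw [zero_add] at h
  show Filter.Tendsto (fun p : X × characterSpace ℂ E => p.2 (f p.1))
    (nhds (x₀, ψ₀)) (nhds (ψ₀ (f x₀)))
  exact h.congr fun p => by rw [map_sub]; ring

lemma continuous_pairChar :
    Continuous fun p : X × characterSpace ℂ E => pairChar p.1 p.2 := by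
  rw [continuous_induced_rng]
  apply WeakDual.continuous_of_continuous_eval
  intro f
  exact (continuous_eval_pair f).congr fun p => (pairChar_apply p.1 p.2 f).symm

lemma pairChar_injective :
    Function.Injective fun p : X × characterSpace ℂ E => pairChar p.1 p.2 := by
  rintro ⟨x, ψ⟩ ⟨y, ψ'⟩ hpq
  have h : pairChar x ψ = pairChar y ψ' := hpq
  have happ : ∀ f : C(X, E), ψ (f x) = ψ' (f y) := fun f => by
    rw [← pairChar_apply x ψ f, h, pairChar_apply]
  have hxy : x = y := by
    by_contra hxy
    obtain ⟨g, hg0, hg1, -⟩ := exists_continuous_zero_one_of_isClosed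
      (isClosed_singleton (x := x)) (isClosed_singleton (x := y))
      (Set.disjoint_singleton.mpr hxy)
    have hgx : g x = 0 := hg0 rfl
    have hgy : g y = 1 := hg1 rfl
    have := happ (iota (cplx g))
    rw [iota_apply, iota_apply, cplx_apply, cplx_apply, hgx, hgy] at this
    simp only [Complex.ofReal_zero, Complex.ofReal_one, map_zero, map_one] at this
    exact zero_ne_one this
  subst hxy
  have hψ : ψ = ψ' := by
    ext a
    simpa using happ (ContinuousMap.const X a)
  rw [hψ]

lemma pairChar_surjective (φ : characterSpace ℂ C(X, E)) :
    ∃ (x : X) (ψ : characterSpace ℂ E), φ = pairChar x ψ := by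
  -- the point x
  obtain ⟨x, hx⟩ : ∃ x : X, ∀ g : C(X, ℂ), φ (iota g) = g x := by
    set χ : characterSpace ℂ C(X, ℂ) := equivAlgHom.symm ((toAlgHom φ).comp iota) with hχ
    obtain ⟨x, hxχ⟩ := (WeakDual.CharacterSpace.homeoEval X ℂ).surjective χ
    refine ⟨x, fun g => ?_⟩
    have h1 : χ g = φ (iota g) := congrFun (equivAlgHom_symm_coe _) g
    have h2 : χ g = g x := by
      rw [← hxχ]; rfl
    rw [← h1, h2]
  -- the character ψ
  refine ⟨x, equivAlgHom.symm ((toAlgHom φ).comp constAlg), ?_⟩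
  set ψ : characterSpace ℂ E := equivAlgHom.symm ((toAlgHom φ).comp constAlg) with hψdef
  have hψ : ∀ a : E, ψ a = φ (ContinuousMap.const X a) := fun a =>
    congrFun (equivAlgHom_symm_coe _) a
  -- key vanishing lemma
  have key : ∀ f : C(X, E), f x = 0 → φ f = 0 := by
    intro f hf
    have bound : ∀ ε : ℝ, 0 < ε → ‖φ f‖ ≤ ‖toCLM φ‖ * ε := by
      intro ε hε
      set U : Set X := {y | ‖f y‖ < ε} with hUdef
      have hUopen : IsOpen U := isOpen_lt f.continuous.norm continuous_const
      have hxU : x ∈ U := by simp [hUdef, hf, hε]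
      obtain ⟨V, hVopen, hxV, hVU⟩ := normal_exists_closure_subset
        (isClosed_singleton (x := x)) hUopen (Set.singleton_subset_iff.mpr hxU)
      obtain ⟨g, hg0, hg1, hg01⟩ := exists_continuous_zero_one_of_isClosed
        isClosed_closure hUopen.isClosed_compl
        (Set.disjoint_left.mpr fun y hy hyc => hyc (hVU hy))
      have hφg : φ (iota (cplx g)) = 0 := by
        have h0 : g x = 0 := hg0 (subset_closure (hxV rfl))
        rw [hx (cplx g), cplx_apply, h0, Complex.ofReal_zero]
      have hsplit : φ f = φ (f - iota (cplx g) * f) := by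
        rw [map_sub, map_mul, hφg, zero_mul, sub_zero]
      have hnorm : ‖f - iota (cplx g) * f‖ ≤ ε := by
        rw [ContinuousMap.norm_le _ (le_of_lt hε)]
        intro y
        have hval : ((f - iota (cplx g) * f : C(X, E))) y
            = ((1 : ℂ) - (g y : ℂ)) • f y := by
          simp only [ContinuousMap.sub_apply, ContinuousMap.mul_apply, iota_apply, cplx_apply]
          rw [sub_smul, one_smul, Algebra.smul_def]
        by_cases hy : y ∈ U
        · rw [hval, norm_smul]
          have h1 : ‖(1 : ℂ) - (g y : ℂ)‖ ≤ 1 := by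
            have := hg01 y
            rw [show (1 : ℂ) - (g y : ℂ) = ((1 - g y : ℝ) : ℂ) by push_cast; ring,
              Complex.norm_real, Real.norm_eq_abs, abs_of_nonneg (by linarith [this.2])]
            linarith [this.1]
          have h2 : ‖f y‖ ≤ ε := le_of_lt hy
          calc ‖(1 : ℂ) - (g y : ℂ)‖ * ‖f y‖ ≤ 1 * ε :=
                mul_le_mul h1 h2 (norm_nonneg _) zero_le_one
            _ = ε := one_mul ε
        · have h1 : g y = 1 := hg1 hy
          rw [hval, h1]
          norm_num
          exact le_of_lt hε
      calc ‖φ f‖ = ‖φ (f - iota (cplx g) * f)‖ := by rw [← hsplit]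
        _ ≤ ‖toCLM φ‖ * ‖f - iota (cplx g) * f‖ := (toCLM φ).le_opNorm _
        _ ≤ ‖toCLM φ‖ * ε := mul_le_mul_of_nonneg_left hnorm (norm_nonneg _)
    -- conclude
    by_contra hne
    have hpos : 0 < ‖φ f‖ := norm_pos_iff.mpr hne
    set c : ℝ := ‖toCLM φ‖ with hcdef
    have hc : 0 ≤ c := norm_nonneg _
    have := bound (‖φ f‖ / (2 * (c + 1))) (by positivity)
    have hlt : c * (‖φ f‖ / (2 * (c + 1))) < ‖φ f‖ := by
      rw [div_eq_inv_mul, ← mul_assoc]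
      have h1 : c * (2 * (c + 1))⁻¹ < 1 := by
        rw [mul_inv_lt_iff₀ (by positivity), one_mul]
        linarith
      nlinarith
    linarith
  -- conclude
  ext f
  rw [pairChar_apply]
  have h0 : φ (f - ContinuousMap.const X (f x)) = 0 := by
    apply key
    simp
  rw [map_sub] at h0
  rw [hψ (f x), ← sub_eq_zero]
  exact h0

end BRU


/-- For a nonempty compact Hausdorff space `X` and a commutative unital Banach
algebra `E`, `C(X, E)` has bounded relative units iff `E` has bounded relative units. -/
theorem hasBoundedRelativeUnits_continuousMap_iff
    (X : Type*) [TopologicalSpace X] [CompactSpace X] [T2Space X] [Nonempty X]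
    (E : Type*) [NormedCommRing E] [NormedAlgebra ℂ E] [CompleteSpace E] :
    HasBoundedRelativeUnits C(X, E) ↔ HasBoundedRelativeUnits E := by
  constructor
  · -- C(X,E) has BRU → E has BRU
    intro H ψ₀
    obtain ⟨x₀⟩ := ‹Nonempty X›
    obtain ⟨m, hm, hH⟩ := H (BRU.pairChar x₀ ψ₀)
    refine ⟨m, hm, fun K hK hψ₀K => ?_⟩
    have hcont : Continuous fun ψ : characterSpace ℂ E => BRU.pairChar x₀ ψ :=
      BRU.continuous_pairChar.comp (Continuous.prodMk_right x₀)
    obtain ⟨a, haJ, haK, han⟩ := hH ((fun ψ => BRU.pairChar x₀ ψ) '' K)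
      (hK.image hcont)
      (by
        rintro ⟨ψ, hψK, hψeq⟩
        have hpair : ((x₀, ψ) : X × characterSpace ℂ E) = (x₀, ψ₀) :=
          BRU.pairChar_injective hψeq
        have hψeq' : ψ = ψ₀ := congrArg Prod.snd hpair
        exact hψ₀K (hψeq' ▸ hψK))
    refine ⟨a x₀, ?_, ?_, le_trans (ContinuousMap.norm_coe_le_norm a x₀) han⟩
    · show ∀ᶠ ψ in nhds ψ₀, ψ (a x₀) = 0
      have ht : Filter.Tendsto (fun ψ : characterSpace ℂ E => BRU.pairChar x₀ ψ)
          (nhds ψ₀) (nhds (BRU.pairChar x₀ ψ₀)) := hcont.continuousAt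
      have haJ' : ∀ᶠ χ in nhds (BRU.pairChar x₀ ψ₀), χ a = 0 := haJ
      exact (ht.eventually haJ').mono fun ψ hψ => by
        rwa [BRU.pairChar_apply] at hψ
    · intro ψ hψK
      have := haK (BRU.pairChar x₀ ψ) ⟨ψ, hψK, rfl⟩
      rwa [BRU.pairChar_apply] at this
  · -- E has BRU → C(X,E) has BRU
    intro H φ₀
    obtain ⟨x₀, ψ₀, rfl⟩ := BRU.pairChar_surjective φ₀
    obtain ⟨m, hm, hH⟩ := H ψ₀
    refine ⟨max m ‖(1 : E)‖, lt_of_lt_of_le hm (le_max_left _ _), fun K hK hφ₀K => ?_⟩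
    set β := fun p : X × characterSpace ℂ E => BRU.pairChar p.1 p.2 with hβ
    have hLclosed : IsClosed (β ⁻¹' K) := hK.isClosed.preimage BRU.continuous_pairChar
    have hmemc : ((x₀, ψ₀) : X × characterSpace ℂ E) ∈ (β ⁻¹' K)ᶜ := fun h => hφ₀K h
    have hnhds : (β ⁻¹' K)ᶜ ∈ nhds (x₀, ψ₀) := hLclosed.isOpen_compl.mem_nhds hmemc
    rw [mem_nhds_prod_iff] at hnhds
    obtain ⟨u, hu, v, hv, huv⟩ := hnhds
    obtain ⟨U, hUu, hUopen, hx₀U⟩ := mem_nhds_iff.mp hu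
    obtain ⟨V, hVv, hVopen, hψ₀V⟩ := mem_nhds_iff.mp hv
    obtain ⟨e, heJ, heV, hen⟩ := hH Vᶜ hVopen.isClosed_compl.isCompact (fun h => h hψ₀V)
    have heJ' : {ψ : characterSpace ℂ E | ψ e = 0} ∈ nhds ψ₀ := heJ
    obtain ⟨W, hWsub, hWopen, hψ₀W⟩ := mem_nhds_iff.mp heJ'
    obtain ⟨N, hNopen, hx₀N, hNU⟩ := normal_exists_closure_subset
      (isClosed_singleton (x := x₀)) hUopen (Set.singleton_subset_iff.2 hx₀U)
    obtain ⟨g, hg0, hg1, hg01⟩ := exists_continuous_zero_one_of_isClosed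
      isClosed_closure hUopen.isClosed_compl
      (Set.disjoint_left.mpr fun y hy hyc => hyc (hNU hy))
    have hcg : Continuous fun y : X => ((g y : ℝ) : ℂ) :=
      Complex.continuous_ofReal.comp g.continuous
    set a : C(X, E) :=
      ⟨fun y => ((g y : ℝ) : ℂ) • (1 : E) + ((1 : ℂ) - ((g y : ℝ) : ℂ)) • e,
        (hcg.smul continuous_const).add ((continuous_const.sub hcg).smul continuous_const)⟩
      with ha
    have haval : ∀ (y : X) (ψ : characterSpace ℂ E),
        ψ (a y) = ((g y : ℝ) : ℂ) + ((1 : ℂ) - ((g y : ℝ) : ℂ)) * ψ e := by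
      intro y ψ
      show ψ (((g y : ℝ) : ℂ) • (1 : E) + ((1 : ℂ) - ((g y : ℝ) : ℂ)) • e) = _
      rw [map_add, map_smul, map_smul, map_one, smul_eq_mul, smul_eq_mul, mul_one]
    refine ⟨a, ?_, ?_, ?_⟩
    · -- a ∈ Jset
      show ∀ᶠ χ in nhds (BRU.pairChar x₀ ψ₀), χ a = 0
      set S := β '' (N ×ˢ W)ᶜ with hS
      have hScompact : IsCompact S :=
        ((hNopen.prod hWopen).isClosed_compl.isCompact).image BRU.continuous_pairChar
      have hφ₀S : BRU.pairChar x₀ ψ₀ ∉ S := by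
        rintro ⟨⟨y, ψ⟩, hmem, heq⟩
        have hpair : ((y, ψ) : X × characterSpace ℂ E) = (x₀, ψ₀) :=
          BRU.pairChar_injective heq
        rw [hpair] at hmem
        exact hmem ⟨hx₀N rfl, hψ₀W⟩
      apply Filter.eventually_of_mem (hScompact.isClosed.isOpen_compl.mem_nhds hφ₀S)
      intro χ hχ
      obtain ⟨y, ψ, rfl⟩ := BRU.pairChar_surjective χ
      have hyψ : (y, ψ) ∈ N ×ˢ W := by
        by_contra hmem
        exact hχ ⟨(y, ψ), hmem, rfl⟩
      have hgy : g y = 0 := hg0 (subset_closure hyψ.1)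
      have hψe : ψ e = 0 := hWsub hyψ.2
      rw [BRU.pairChar_apply, haval y ψ, hgy, hψe]
      push_cast
      ring
    · -- value 1 on K
      intro χ hχK
      obtain ⟨y, ψ, rfl⟩ := BRU.pairChar_surjective χ
      have hmemL : (y, ψ) ∈ β ⁻¹' K := hχK
      have hnotUV : (y, ψ) ∉ u ×ˢ v := fun h => (huv h) hmemL
      rw [BRU.pairChar_apply, haval y ψ]
      by_cases hyU : y ∈ U
      · have hψV : ψ ∉ V := fun hψ => hnotUV ⟨hUu hyU, hVv hψ⟩
        rw [heV ψ hψV]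
        ring
      · have hgy : g y = 1 := hg1 hyU
        rw [hgy]
        push_cast
        ring
    · -- norm bound
      rw [ContinuousMap.norm_le _ (le_trans (le_of_lt hm) (le_max_left _ _))]
      intro y
      have h01 := hg01 y
      have e1 : ‖((g y : ℝ) : ℂ) • (1 : E)‖ = g y * ‖(1 : E)‖ := by
        rw [norm_smul, Complex.norm_real, Real.norm_eq_abs, abs_of_nonneg h01.1]
      have e2 : ‖((1 : ℂ) - ((g y : ℝ) : ℂ)) • e‖ = (1 - g y) * ‖e‖ := by
        rw [show (1 : ℂ) - ((g y : ℝ) : ℂ) = ((1 - g y : ℝ) : ℂ) by push_cast; ring,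
          norm_smul, Complex.norm_real, Real.norm_eq_abs,
          abs_of_nonneg (by linarith [h01.2])]
      have hsum : ‖a y‖ ≤ g y * ‖(1 : E)‖ + (1 - g y) * ‖e‖ := by
        calc ‖a y‖ ≤ ‖((g y : ℝ) : ℂ) • (1 : E)‖ + ‖((1 : ℂ) - ((g y : ℝ) : ℂ)) • e‖ :=
              norm_add_le _ _
          _ = g y * ‖(1 : E)‖ + (1 - g y) * ‖e‖ := by rw [e1, e2]
      have hA : g y * ‖(1 : E)‖ ≤ g y * max m ‖(1 : E)‖ :=
        mul_le_mul_of_nonneg_left (le_max_right m _) h01.1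
      have hB : (1 - g y) * ‖e‖ ≤ (1 - g y) * max m ‖(1 : E)‖ :=
        mul_le_mul_of_nonneg_left (le_trans hen (le_max_left _ _)) (by linarith [h01.2])
      linarith
end

section
/- Let A be a commutative Banach algebra with identity. Then the following are equivalent: (1) A has bounded relative units; (2) for each φ ∈ M(A) there exists a constant c_φ > 0 with the following property: for every closed subset K of M(A) with φ ∉ K, there exists x ∈ A such that ‖x‖ ≤ c_φ, x̂ = 0 on K, and x̂ = 1 on some neighborhood of φ. -/
open WeakDual

variable {X : Type*} [TopologicalSpace X] [CompactSpace X] [T2Space X]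
  {E : Type*} [NormedCommRing E] [NormedAlgebra ℂ E] [CompleteSpace E]
  {B : Type*} [NormedCommRing B] [NormedAlgebra ℂ B] [CompleteSpace B]
  {Bt : Type*} [NormedCommRing Bt] [NormedAlgebra ℂ Bt] [CompleteSpace Bt]

/-- For a commutative unital Banach algebra `A`, having bounded relative units
is equivalent to: for each character `φ` there is `c_φ > 0` such that for every closed
`K ⊆ M(A)` with `φ ∉ K` there is `x ∈ A` with `‖x‖ ≤ c_φ`, `x̂ = 0` on `K`, and `x̂ = 1` on a
neighbourhood of `φ`. -/
theorem hasBoundedRelativeUnits_iff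
    (A : Type*) [NormedCommRing A] [NormedAlgebra ℂ A] [CompleteSpace A] :
    HasBoundedRelativeUnits A ↔
      ∀ φ : characterSpace ℂ A, ∃ c : ℝ, 0 < c ∧
        ∀ K : Set (characterSpace ℂ A), IsClosed K → φ ∉ K →
          ∃ x : A, ‖x‖ ≤ c ∧ (∀ χ ∈ K, χ x = 0) ∧ (∀ᶠ χ in nhds φ, χ x = 1) := by
  constructor
  · intro h φ
    obtain ⟨m, hm, hK⟩ := h φ
    refine ⟨‖(1 : A)‖ + m, by positivity, fun K hKc hφK => ?_⟩
    obtain ⟨a, haJ, haK, hanorm⟩ := hK K (hKc.isCompact) hφK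
    refine ⟨1 - a, ?_, fun χ hχ => ?_, ?_⟩
    · exact (norm_sub_le _ _).trans (add_le_add le_rfl hanorm)
    · simp [haK χ hχ]
    · filter_upwards [haJ] with χ hχ
      simp [hχ]
  · intro h φ
    obtain ⟨c, hc, hK⟩ := h φ
    refine ⟨‖(1 : A)‖ + c, by positivity, fun K hKc hφK => ?_⟩
    obtain ⟨x, hxnorm, hxK, hxφ⟩ := hK K hKc.isClosed hφK
    refine ⟨1 - x, ?_, fun χ hχ => ?_, ?_⟩
    · filter_upwards [hxφ] with χ hχ
      simp [hχ]
    · simp [hxK χ hχ]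
    · exact (norm_sub_le _ _).trans (add_le_add le_rfl hxnorm)
end

section
/- Let (X,E,B,B̃) be an admissible quadruple. Then the associated map β : X × M(E) → M(B̃), (x,ψ) ↦ ψ∘e_x, is well defined and injective. -/
open WeakDual

variable {X : Type*} [TopologicalSpace X] [CompactSpace X] [T2Space X]
  {E : Type*} [NormedCommRing E] [NormedAlgebra ℂ E] [CompleteSpace E]
  {B : Type*} [NormedCommRing B] [NormedAlgebra ℂ B] [CompleteSpace B]
  {Bt : Type*} [NormedCommRing Bt] [NormedAlgebra ℂ Bt] [CompleteSpace Bt]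

/-- For an admissible quadruple `(X, E, B, B̃)`, the associated map
`β : X × M(E) → M(B̃)`, `(x, ψ) ↦ ψ ∘ e_x`, is well defined (each `ψ ∘ e_x` is a character
of `B̃`) and injective. -/
theorem admissibleQuadruple_beta_wellDefined_injective
    (X : Type*) [TopologicalSpace X] [CompactSpace X] [T2Space X]
    (E : Type*) [NormedCommRing E] [NormedAlgebra ℂ E] [CompleteSpace E]
    (B : Type*) [NormedCommRing B] [NormedAlgebra ℂ B] [CompleteSpace B]
    (Bt : Type*) [NormedCommRing Bt] [NormedAlgebra ℂ Bt] [CompleteSpace Bt]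
    (Q : AdmissibleQuadruple X E B Bt) :
    (∀ (x : X) (ψ : characterSpace ℂ E), ∃ φ : characterSpace ℂ Bt,
        ∀ f : Bt, φ f = ψ (Q.incT f x)) ∧
    (∀ (x x' : X) (ψ ψ' : characterSpace ℂ E),
        (∀ f : Bt, ψ (Q.incT f x) = ψ' (Q.incT f x')) → x = x' ∧ ψ = ψ') := by
  constructor
  · intro x ψ
    let ev : C(X, E) →ₐ[ℂ] E :=
      { toFun := fun f => f x
        map_one' := rfl
        map_mul' := fun f g => rfl
        map_zero' := rfl
        map_add' := fun f g => rfl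
        commutes' := fun c => rfl }
    refine ⟨CharacterSpace.equivAlgHom.symm
      (((CharacterSpace.equivAlgHom ψ).comp ev).comp Q.incT), fun f => ?_⟩
    simp [CharacterSpace.equivAlgHom_symm_coe, ev]
    rfl
  · intro x x' ψ ψ' h
    have hx : x = x' := by
      by_contra hne
      obtain ⟨g, hg⟩ := Q.incB_separates x x' hne
      obtain ⟨f, hf⟩ := Q.smul_mem g (1 : E)
      have h1 : ψ (Q.incT f x) = Q.incB g x := by
        rw [hf x, map_smul, map_one ψ, smul_eq_mul, mul_one]
      have h2 : ψ' (Q.incT f x') = Q.incB g x' := by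
        rw [hf x', map_smul, map_one ψ', smul_eq_mul, mul_one]
      exact hg (by rw [← h1, h f, h2])
    subst hx
    refine ⟨rfl, ?_⟩
    ext a
    obtain ⟨f, hf⟩ := Q.smul_mem (1 : B) a
    have hfa : Q.incT f x = a := by
      have := hf x
      rwa [map_one, ContinuousMap.one_apply, one_smul] at this
    have := h f
    rwa [hfa] at this
end

section
/- Let X be a nonempty compact Hausdorff space and E a commutative semisimple Banach algebra with unit. Then C(X,E) is semisimple, and every character of C(X,E) is of the form ψ∘e_x for some x ∈ X and ψ ∈ M(E), where e_x denotes evaluation at x; that is, the map β : X × M(E) → M(C(X,E)), (x,ψ) ↦ ψ∘e_x, is a bijection. -/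
open WeakDual

variable {X : Type*} [TopologicalSpace X] [CompactSpace X] [T2Space X]
  {E : Type*} [NormedCommRing E] [NormedAlgebra ℂ E] [CompleteSpace E]
  {B : Type*} [NormedCommRing B] [NormedAlgebra ℂ B] [CompleteSpace B]
  {Bt : Type*} [NormedCommRing Bt] [NormedAlgebra ℂ Bt] [CompleteSpace Bt]

section Aux

open WeakDual.CharacterSpace

variable (X E) in
/-- The constant-function algebra homomorphism `E →ₐ[ℂ] C(X, E)`. -/
noncomputable def constAlgHom : E →ₐ[ℂ] C(X, E) where
  toFun a := ContinuousMap.const X a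
  map_one' := rfl
  map_mul' _ _ := rfl
  map_zero' := rfl
  map_add' _ _ := rfl
  commutes' _ := rfl

variable (X E) in
/-- The algebra homomorphism `C(X, ℂ) →ₐ[ℂ] C(X, E)`, `g ↦ g • 1`. -/
noncomputable def iotaAlgHom : C(X, ℂ) →ₐ[ℂ] C(X, E) :=
  (Algebra.ofId ℂ E).compLeftContinuous ℂ (continuous_algebraMap ℂ E)

lemma iotaAlgHom_apply (g : C(X, ℂ)) (y : X) :
    iotaAlgHom X E g y = g y • (1 : E) := by
  simp [iotaAlgHom, Algebra.ofId_apply, Algebra.algebraMap_eq_smul_one]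
  exact Algebra.algebraMap_eq_smul_one (g y)

/-- The character `ψ ∘ e_x` of `C(X, E)`. -/
noncomputable def evalChar (x : X) (ψ : characterSpace ℂ E) :
    characterSpace ℂ C(X, E) :=
  equivAlgHom.symm ((equivAlgHom ψ).comp (ContinuousMap.evalAlgHom ℂ E x))

@[simp] lemma evalChar_apply (x : X) (ψ : characterSpace ℂ E) (f : C(X, E)) :
    evalChar x ψ f = ψ (f x) := rfl

/-- Key vanishing lemma: if `φ` restricted to `C(X,ℂ)·1` is evaluation at `x`, then `φ`
vanishes on functions vanishing at `x`. -/
lemma char_vanishes (φ : characterSpace ℂ C(X, E)) (x : X)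
    (hx : ∀ g : C(X, ℂ), φ (iotaAlgHom X E g) = g x)
    (f : C(X, E)) (hf : f x = 0) : φ f = 0 := by
  set L : C(X, E) →L[ℂ] ℂ := (φ : WeakDual ℂ C(X, E)) with hL
  have hLf : ∀ u : C(X, E), φ u = L u := fun _ => rfl
  have key : ∀ ε : ℝ, 0 < ε → ‖φ f‖ ≤ ‖L‖ * ε := by
    intro ε hε
    set U : Set X := {y | ‖f y‖ < ε} with hU
    have hUopen : IsOpen U := isOpen_lt (by continuity) continuous_const
    have hxU : x ∈ U := by simp [hU, hf, hε]
    obtain ⟨g, hg0, hg1, hg01⟩ := exists_continuous_zero_one_of_isClosed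
      hUopen.isClosed_compl isClosed_singleton
      (Set.disjoint_singleton_right.mpr (by simpa using hxU))
    set g' : C(X, ℂ) := (⟨Complex.ofReal, Complex.continuous_ofReal⟩ : C(ℝ, ℂ)).comp g with hg'
    have hφg' : φ (iotaAlgHom X E g') = 1 := by
      rw [hx g']
      simp [hg', hg1 rfl]
    have hsplit : φ f = φ (iotaAlgHom X E g' * f) := by
      have : f = iotaAlgHom X E g' * f + (1 - iotaAlgHom X E g') * f := by ring
      calc φ f = φ (iotaAlgHom X E g' * f) + φ ((1 - iotaAlgHom X E g') * f) := by
            rw [← map_add]; exact congrArg φ this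
        _ = φ (iotaAlgHom X E g' * f) := by
            have h2 : φ ((1 - iotaAlgHom X E g') * f) = 0 := by
              rw [map_mul, map_sub, map_one, hφg', sub_self, zero_mul]
            rw [h2, add_zero]
    have hnorm : ‖iotaAlgHom X E g' * f‖ ≤ ε := by
      apply ContinuousMap.norm_le _ hε.le |>.mpr
      intro y
      have : (iotaAlgHom X E g' * f) y = g' y • f y := by
        simp [iotaAlgHom_apply, smul_mul_assoc]
      rw [this, norm_smul]
      by_cases hy : y ∈ U
      · have h1 : ‖g' y‖ ≤ 1 := by
          simp only [hg', ContinuousMap.comp_apply, ContinuousMap.coe_mk,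
            Complex.norm_real, Real.norm_eq_abs]
          have := hg01 y
          rw [abs_le]
          constructor <;> [linarith [this.1]; linarith [this.2]]
        calc ‖g' y‖ * ‖f y‖ ≤ 1 * ε := by
              apply mul_le_mul h1 (le_of_lt hy) (norm_nonneg _) zero_le_one
          _ = ε := one_mul ε
      · have : g y = 0 := hg0 hy
        simp [hg', this, hε.le]
    calc ‖φ f‖ = ‖L (iotaAlgHom X E g' * f)‖ := by rw [hsplit, hLf]
      _ ≤ ‖L‖ * ‖iotaAlgHom X E g' * f‖ := L.le_opNorm _
      _ ≤ ‖L‖ * ε := by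
          exact mul_le_mul_of_nonneg_left hnorm (norm_nonneg L)
  by_contra h
  have hpos : 0 < ‖φ f‖ := norm_pos_iff.mpr h
  rcases le_or_gt ‖L‖ 0 with hL0 | hL0
  · have := key 1 one_pos
    nlinarith
  · have := key (‖φ f‖ / (2 * ‖L‖)) (by positivity)
    have h2 : ‖L‖ * (‖φ f‖ / (2 * ‖L‖)) = ‖φ f‖ / 2 := by
      field_simp
    rw [h2] at this
    linarith

end Aux

/-- **Hausner.** For a nonempty compact Hausdorff `X` and a commutative
semisimple unital Banach algebra `E`, the algebra `C(X, E)` is semisimple; moreover every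
`ψ ∘ e_x` is a character of `C(X, E)` and every character of `C(X, E)` is of this form for a
unique pair `(x, ψ) ∈ X × M(E)`, i.e. `β : X × M(E) → M(C(X, E))` is a bijection. -/
theorem hausner_semisimple_characters
    (X : Type*) [TopologicalSpace X] [CompactSpace X] [T2Space X] [Nonempty X]
    (E : Type*) [NormedCommRing E] [NormedAlgebra ℂ E] [CompleteSpace E]
    (hE : IsSemisimple E) :
    IsSemisimple C(X, E) ∧
    (∀ (x : X) (ψ : characterSpace ℂ E), ∃ φ : characterSpace ℂ C(X, E),
        ∀ f : C(X, E), φ f = ψ (f x)) ∧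
    (∀ φ : characterSpace ℂ C(X, E), ∃! p : X × characterSpace ℂ E,
        ∀ f : C(X, E), φ f = p.2 (f p.1)) := by
  open WeakDual.CharacterSpace in
  refine ⟨?_, fun x ψ => ⟨evalChar x ψ, fun f => rfl⟩, ?_⟩
  · intro f hf
    ext x
    refine hE (f x) fun ψ => ?_
    simpa using hf (evalChar x ψ)
  · intro φ
    -- the character of C(X, ℂ)
    set χ : characterSpace ℂ C(X, ℂ) :=
      equivAlgHom.symm ((equivAlgHom φ).comp (iotaAlgHom X E)) with hχ
    obtain ⟨x, hxχ⟩ := (homeoEval X ℂ).surjective χ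
    have hx : ∀ g : C(X, ℂ), φ (iotaAlgHom X E g) = g x := by
      intro g
      have h1 : χ g = φ (iotaAlgHom X E g) := rfl
      have h2 : χ g = g x := by
        rw [← hxχ]; exact continuousMapEval_apply_apply X ℂ x g
      rw [← h1, h2]
    set ψ : characterSpace ℂ E :=
      equivAlgHom.symm ((equivAlgHom φ).comp (constAlgHom X E)) with hψ
    have hψa : ∀ a : E, ψ a = φ (ContinuousMap.const X a) := fun _ => rfl
    have hrep : ∀ f : C(X, E), φ f = ψ (f x) := by
      intro f
      have h0 : φ (f - ContinuousMap.const X (f x)) = 0 := by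
        apply char_vanishes φ x hx
        simp
      rw [map_sub, sub_eq_zero] at h0
      rw [h0, hψa]
    refine ⟨(x, ψ), hrep, ?_⟩
    rintro ⟨y, ρ⟩ hq
    have hxy : y = x := by
      by_contra hne
      obtain ⟨g, hg0, hg1, -⟩ := exists_continuous_zero_one_of_isClosed
        (isClosed_singleton (x := x)) (isClosed_singleton (x := y))
        (Set.disjoint_singleton.mpr (Ne.symm hne))
      set g' : C(X, ℂ) := (⟨Complex.ofReal, Complex.continuous_ofReal⟩ : C(ℝ, ℂ)).comp g with hg'
      set f : C(X, E) := iotaAlgHom X E g' with hfdef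
      have h1 : φ f = ρ (f y) := hq f
      have h2 : φ f = ψ (f x) := hrep f
      have hfx : f x = 0 := by
        simp [hfdef, iotaAlgHom_apply, hg', hg0 rfl]
      have hfy : f y = 1 := by
        simp [hfdef, iotaAlgHom_apply, hg', hg1 rfl]
      rw [hfx, map_zero] at h2
      rw [hfy, map_one] at h1
      rw [h1] at h2
      exact one_ne_zero h2
    subst hxy
    have hρψ : ρ = ψ := by
      apply Subtype.ext
      apply ContinuousLinearMap.ext
      intro a
      have h1 : φ (ContinuousMap.const X a) = ρ a := by
        simpa using hq (ContinuousMap.const X a)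
      have h2 : φ (ContinuousMap.const X a) = ψ a := (hψa a).symm
      show ρ a = ψ a
      rw [← h1, h2]
    rw [hρψ]
end

section
/- Let X and Y be compact Hausdorff spaces, let E and F be unital commutative semisimple Banach algebras which are Ditkin algebras, and let T : C(X,E) → C(Y,F) be a separating linear bijection. Then (i) T is continuous, (ii) T⁻¹ is separating, and (iii) X × M(E) and Y × M(F) are homeomorphic. -/
open WeakDual

section Abstract

set_option linter.unusedSectionVars false

variable {A : Type*} [NormedCommRing A] [NormedAlgebra ℂ A] [CompleteSpace A]

lemma char_norm (φ : characterSpace ℂ A) (a : A) : ‖φ a‖ ≤ ‖(1:A)‖ * ‖a‖ :=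
  calc ‖φ a‖ ≤ ‖toStrongDual (φ : WeakDual ℂ A)‖ * ‖a‖ := ContinuousLinearMap.le_opNorm _ a
  _ ≤ ‖(1:A)‖ * ‖a‖ :=
      mul_le_mul_of_nonneg_right (CharacterSpace.norm_le_norm_one φ) (norm_nonneg a)

lemma mem_jset_iff {φ : characterSpace ℂ A} {a : A} :
    a ∈ Jset A φ ↔ ∃ V : Set (characterSpace ℂ A),
      IsOpen V ∧ φ ∈ V ∧ ∀ χ ∈ V, χ a = 0 := by
  constructor
  · intro h
    obtain ⟨t, ht, hto, hφt⟩ := eventually_nhds_iff.mp h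
    exact ⟨t, hto, hφt, ht⟩
  · rintro ⟨V, hVo, hφV, hV⟩
    exact eventually_nhds_iff.mpr ⟨V, hV, hVo, hφV⟩

lemma exists_char_apply_ne {φ χ : characterSpace ℂ A} (h : φ ≠ χ) : ∃ b : A, φ b ≠ χ b := by
  by_contra hc
  push_neg at hc
  exact h (by ext a; exact hc a)

/-- From Ditkin's condition: given distinct characters `φ ≠ χ`, there is `j ∈ J_φ` with
`χ j ≠ 0`. -/
lemma exists_jset_apply_ne (hdit : IsDitkinAlgebra A) {φ χ : characterSpace ℂ A}
    (h : φ ≠ χ) : ∃ j ∈ Jset A φ, χ j ≠ 0 := by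
  obtain ⟨b, hb⟩ := exists_char_apply_ne h
  set a : A := b - (φ b) • 1 with ha
  have hφa : φ a = 0 := by
    simp [ha, map_sub, map_smul, map_one φ, smul_eq_mul]
  have hχa : χ a ≠ 0 := by
    simp only [ha, map_sub, map_smul, map_one χ, smul_eq_mul, mul_one]
    exact sub_ne_zero.mpr (fun hh => hb hh.symm)
  have hmem := hdit φ a hφa
  have hε : (0:ℝ) < ‖χ a‖ / (‖(1:A)‖ + 1) := by
    apply div_pos (norm_pos_iff.mpr hχa)
    positivity
  obtain ⟨y, hy, hdist⟩ := Metric.mem_closure_iff.mp hmem _ hε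
  obtain ⟨j, hj, rfl⟩ := hy
  refine ⟨j, hj, fun hjz => ?_⟩
  have h1 : χ (a - a * j) = χ a := by
    simp [map_sub, map_mul, hjz]
  have h2 : ‖χ a‖ ≤ ‖(1:A)‖ * ‖a - a * j‖ := h1 ▸ char_norm χ (a - a * j)
  have h3 : ‖a - a * j‖ < ‖χ a‖ / (‖(1:A)‖ + 1) := by
    simpa [dist_eq_norm] using hdist
  have h4 : ‖(1:A)‖ * ‖a - a * j‖ < ‖χ a‖ := by
    calc ‖(1:A)‖ * ‖a - a * j‖ ≤ (‖(1:A)‖+1) * ‖a - a * j‖ := by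
          apply mul_le_mul_of_nonneg_right _ (norm_nonneg _); linarith [norm_nonneg (1:A)]
      _ < (‖(1:A)‖+1) * (‖χ a‖ / (‖(1:A)‖ + 1)) := by
          apply mul_lt_mul_of_pos_left h3; positivity
      _ = ‖χ a‖ := by field_simp
  linarith [h2, h4]

/-- Regularity: for a closed set `S` of characters not containing `φ`, there is `a` with
`φ a = 1` vanishing on a neighbourhood of `S`. -/
lemma exists_one_at_vanish_near (hdit : IsDitkinAlgebra A) {S : Set (characterSpace ℂ A)}
    (hS : IsClosed S) {φ : characterSpace ℂ A} (hφ : φ ∉ S) :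
    ∃ a : A, φ a = 1 ∧ ∃ V, IsOpen V ∧ S ⊆ V ∧ ∀ χ ∈ V, χ a = 0 := by
  have hsel : ∀ ψ : S, ∃ j, j ∈ Jset A (ψ : characterSpace ℂ A) ∧ φ j ≠ 0 := by
    rintro ⟨ψ, hψ⟩
    obtain ⟨j, hj, hjφ⟩ := exists_jset_apply_ne hdit
      (fun h : ψ = φ => hφ (h ▸ hψ))
    exact ⟨j, hj, hjφ⟩
  choose j hj hjφ using hsel
  have hV : ∀ ψ : S, ∃ V, IsOpen V ∧ (ψ : characterSpace ℂ A) ∈ V ∧ ∀ χ ∈ V, χ (j ψ) = 0 :=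
    fun ψ => mem_jset_iff.mp (hj ψ)
  choose V hVo hVmem hVz using hV
  have hcov : S ⊆ ⋃ ψ : S, V ψ := fun ψ hψ => Set.mem_iUnion.mpr ⟨⟨ψ, hψ⟩, hVmem _⟩
  obtain ⟨t, ht⟩ := (hS.isCompact).elim_finite_subcover V hVo hcov
  set a0 : A := ∏ ψ ∈ t, j ψ with ha0
  have hφa0 : φ a0 ≠ 0 := by
    rw [ha0, map_prod]
    exact Finset.prod_ne_zero_iff.mpr (fun ψ _ => hjφ ψ)
  refine ⟨(φ a0)⁻¹ • a0, ?_, ⋃ ψ ∈ t, V ψ, ?_, ht, ?_⟩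
  · rw [map_smul, smul_eq_mul, inv_mul_cancel₀ hφa0]
  · exact isOpen_biUnion (fun ψ _ => hVo ψ)
  · intro χ hχ
    obtain ⟨ψ, hψt, hχV⟩ := Set.mem_iUnion₂.mp hχ
    have hz : χ a0 = 0 := by
      rw [ha0, map_prod]
      exact Finset.prod_eq_zero hψt (hVz ψ χ hχV)
    rw [map_smul, smul_eq_mul, hz, mul_zero]

/-- If an ideal is proper, some character annihilates it. -/
lemma exists_char_of_ne_top {I : Ideal A} (hI : I ≠ ⊤) :
    ∃ φ : characterSpace ℂ A, ∀ a ∈ I, φ a = 0 := by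
  obtain ⟨M, hM, hIM⟩ := I.exists_le_maximal hI
  exact ⟨M.toCharacterSpace, fun a ha => M.toCharacterSpace_apply_eq_zero_of_mem (hIM ha)⟩

/-- Normality: for disjoint closed sets `S`, `K` of characters, there is `u` equal to `1` on `K`
and vanishing on a neighbourhood of `S`. -/
lemma exists_one_on_vanish_near (hdit : IsDitkinAlgebra A) {S K : Set (characterSpace ℂ A)}
    (hS : IsClosed S) (hK : IsClosed K) (hdisj : Disjoint S K) :
    ∃ u : A, (∀ χ ∈ K, χ u = 1) ∧ ∃ V, IsOpen V ∧ S ⊆ V ∧ ∀ χ ∈ V, χ u = 0 := by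
  classical
  set JS : Ideal A :=
    { carrier := {a | ∃ V, IsOpen V ∧ S ⊆ V ∧ ∀ χ ∈ V, χ a = 0}
      add_mem' := by
        rintro a b ⟨V1, hV1o, hSV1, hV1⟩ ⟨V2, hV2o, hSV2, hV2⟩
        exact ⟨V1 ∩ V2, hV1o.inter hV2o, Set.subset_inter hSV1 hSV2,
          fun χ hχ => by rw [map_add, hV1 χ hχ.1, hV2 χ hχ.2, add_zero]⟩
      zero_mem' := ⟨Set.univ, isOpen_univ, Set.subset_univ _, fun χ _ => map_zero χ⟩
      smul_mem' := by
        rintro c a ⟨V, hVo, hSV, hV⟩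
        exact ⟨V, hVo, hSV, fun χ hχ => by
          rw [smul_eq_mul, map_mul, hV χ hχ, mul_zero]⟩ } with hJS
  set kK : Ideal A :=
    { carrier := {a | ∀ χ ∈ K, χ a = 0}
      add_mem' := fun {a b} ha hb χ hχ => by rw [map_add, ha χ hχ, hb χ hχ, add_zero]
      zero_mem' := fun χ _ => map_zero χ
      smul_mem' := fun c a ha χ hχ => by
        rw [smul_eq_mul, map_mul, ha χ hχ, mul_zero] } with hkK
  have hsup : JS ⊔ kK = ⊤ := by
    by_contra hne
    obtain ⟨φ, hφ⟩ := exists_char_of_ne_top hne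
    by_cases hφK : φ ∈ K
    · have hφS : φ ∉ S := fun h => (Set.disjoint_left.mp hdisj h) hφK
      obtain ⟨a, ha1, V, hVo, hSV, hV⟩ := exists_one_at_vanish_near hdit hS hφS
      have : a ∈ JS := ⟨V, hVo, hSV, hV⟩
      have := hφ a (Ideal.mem_sup_left this)
      rw [ha1] at this; exact one_ne_zero this
    · obtain ⟨a, ha1, V, hVo, hKV, hV⟩ := exists_one_at_vanish_near hdit hK hφK
      have : a ∈ kK := fun χ hχ => hV χ (hKV hχ)
      have := hφ a (Ideal.mem_sup_right this)
      rw [ha1] at this; exact one_ne_zero this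
  have h1 : (1:A) ∈ JS ⊔ kK := hsup ▸ Submodule.mem_top
  obtain ⟨u, hu, v, hv, huv⟩ := Submodule.mem_sup.mp h1
  obtain ⟨V, hVo, hSV, hV⟩ := hu
  refine ⟨u, fun χ hχ => ?_, V, hVo, hSV, hV⟩
  have := congrArg χ huv
  rw [map_add, map_one, hv χ hχ, add_zero] at this
  exact this

end Abstract

section Support

set_option linter.unusedSectionVars false

variable {A : Type*} [NormedCommRing A] [NormedAlgebra ℂ A] [CompleteSpace A]

/-- `U` is a null open for the functional `ℓ`: `ℓ` kills every element whose Gelfand transform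
is supported in `U`. -/
def NullFor (ℓ : A →ₗ[ℂ] ℂ) (U : Set (characterSpace ℂ A)) : Prop :=
  ∀ f : A, (∀ χ, χ ∉ U → χ f = 0) → ℓ f = 0

/-- The support of a functional `ℓ`. -/
def suppSet (ℓ : A →ₗ[ℂ] ℂ) : Set (characterSpace ℂ A) :=
  {φ | ∀ U, IsOpen U → φ ∈ U → ∃ f, (∀ χ, χ ∉ U → χ f = 0) ∧ ℓ f ≠ 0}

lemma ell_vanish_list (hss : IsSemisimple A) (hdit : IsDitkinAlgebra A) (ℓ : A →ₗ[ℂ] ℂ) :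
    ∀ L : List (Set (characterSpace ℂ A)), (∀ U ∈ L, IsOpen U ∧ NullFor ℓ U) →
    ∀ K : Set (characterSpace ℂ A), IsClosed K → (K ⊆ {χ | ∃ U ∈ L, χ ∈ U}) →
    ∀ g : A, (∀ χ, χ ∉ K → χ g = 0) → ℓ g = 0 := by
  intro L
  induction L with
  | nil =>
    intro _ K _ hKcov g hg
    have : g = 0 := hss g (fun χ => by
      by_cases hχ : χ ∈ K
      · obtain ⟨U, hU, -⟩ := hKcov hχ
        exact absurd hU List.not_mem_nil
      · exact hg χ hχ)
    rw [this, map_zero]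
  | cons U L ih =>
    intro hL K hK hKcov g hg
    have hUo : IsOpen U := (hL U (List.mem_cons_self)).1
    have hUnull : NullFor ℓ U := (hL U (List.mem_cons_self)).2
    set W : Set (characterSpace ℂ A) := {χ | ∃ V ∈ L, χ ∈ V} with hW
    have hWo : IsOpen W := by
      have : W = ⋃ V ∈ L, V := by
        ext χ; simp [hW]
      rw [this]
      exact isOpen_biUnion (fun V hV => (hL V (List.mem_cons_of_mem U hV)).1)
    set K' : Set (characterSpace ℂ A) := K \ W with hK'
    have hK'c : IsClosed K' := hK.sdiff hWo
    have hK'U : K' ⊆ U := by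
      rintro χ ⟨hχK, hχW⟩
      rcases hKcov hχK with ⟨V, hVmem, hχV⟩
      rcases List.mem_cons.mp hVmem with rfl | hVL
      · exact hχV
      · exact absurd ⟨V, hVL, hχV⟩ hχW
    obtain ⟨O, hOo, hK'O, hcO⟩ := normal_exists_closure_subset hK'c hUo hK'U
    obtain ⟨u, hu1, V, hVo, hSV, hVz⟩ :=
      exists_one_on_vanish_near hdit (isClosed_compl_iff.mpr hUo) isClosed_closure
        (by
          rw [Set.disjoint_left]
          intro χ hχ hχc
          exact hχ (hcO hχc))
    have hgu : ℓ (g * u) = 0 := by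
      apply hUnull
      intro χ hχU
      rw [map_mul, hVz χ (hSV hχU), mul_zero]
    have hrest : ℓ (g - g * u) = 0 := by
      apply ih (fun V hV => hL V (List.mem_cons_of_mem U hV)) (K ∩ Oᶜ)
        (hK.inter (isClosed_compl_iff.mpr hOo))
      · rintro χ ⟨hχK, hχO⟩
        rcases hKcov hχK with ⟨V', hV'mem, hχV'⟩
        have : χ ∈ W := by
          by_contra hχW
          exact hχO (hK'O ⟨hχK, hχW⟩)
        exact this
      · intro χ hχ
        rw [Set.mem_inter_iff, not_and_or] at hχ
        rcases hχ with hχK | hχO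
        rotate_left
        · rw [Set.mem_compl_iff, not_not] at hχO
          rw [map_sub, map_mul, hu1 χ (subset_closure hχO), mul_one, sub_self]
        · rw [map_sub, map_mul, hg χ hχK, zero_mul, sub_zero]
    have := congrArg (ℓ ·) (sub_add_cancel g (g * u)).symm
    rw [this, map_add, hrest, hgu, add_zero]

/-- If `g`'s Gelfand transform vanishes on an open set containing the support of `ℓ`,
then `ℓ g = 0`. -/
lemma ell_eq_zero_of_vanish_near_supp (hss : IsSemisimple A) (hdit : IsDitkinAlgebra A)
    (ℓ : A →ₗ[ℂ] ℂ) {V : Set (characterSpace ℂ A)} (hVo : IsOpen V) (hsupp : suppSet ℓ ⊆ V)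
    {g : A} (hg : ∀ χ ∈ V, χ g = 0) : ℓ g = 0 := by
  classical
  set K := Vᶜ with hKdef
  have hKc : IsClosed K := isClosed_compl_iff.mpr hVo
  have hnull : ∀ φ : K, ∃ U, IsOpen U ∧ (φ : characterSpace ℂ A) ∈ U ∧ NullFor ℓ U := by
    rintro ⟨φ, hφ⟩
    have : φ ∉ suppSet ℓ := fun h => hφ (hsupp h)
    simp only [suppSet, Set.mem_setOf_eq, not_forall] at this
    obtain ⟨U, hUo, hφU, hU⟩ := this
    push_neg at hU
    exact ⟨U, hUo, hφU, fun f hf => hU f hf⟩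
  choose U hUo hUmem hUnull using hnull
  have hcov : K ⊆ ⋃ φ : K, U φ := fun φ hφ => Set.mem_iUnion.mpr ⟨⟨φ, hφ⟩, hUmem _⟩
  obtain ⟨t, ht⟩ := (hKc.isCompact).elim_finite_subcover U hUo hcov
  apply ell_vanish_list hss hdit ℓ (t.toList.map U)
    (by
      intro V' hV'
      obtain ⟨φ, -, rfl⟩ := List.mem_map.mp hV'
      exact ⟨hUo φ, hUnull φ⟩)
    K hKc
    (by
      intro χ hχ
      obtain ⟨φ, hφt, hχU⟩ := Set.mem_iUnion₂.mp (ht hχ)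
      exact ⟨U φ, List.mem_map.mpr ⟨φ, Finset.mem_toList.mpr hφt, rfl⟩, hχU⟩)
  intro χ hχ
  exact hg χ (not_not.mp hχ)

lemma suppSet_nonempty (hss : IsSemisimple A) (hdit : IsDitkinAlgebra A)
    {ℓ : A →ₗ[ℂ] ℂ} (hℓ : ℓ ≠ 0) : (suppSet ℓ).Nonempty := by
  rw [Set.nonempty_iff_ne_empty]
  intro h
  apply hℓ
  ext g
  simp only [LinearMap.zero_apply]
  exact ell_eq_zero_of_vanish_near_supp hss hdit ℓ isOpen_empty
    (h ▸ subset_rfl) (fun χ hχ => absurd hχ (Set.notMem_empty χ))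

lemma suppSet_subsingleton (hss : IsSemisimple A)
    {ℓ : A →ₗ[ℂ] ℂ} (hsep : ∀ f g : A, f * g = 0 → ℓ f * ℓ g = 0) :
    (suppSet ℓ).Subsingleton := by
  intro φ1 h1 φ2 h2
  by_contra hne
  obtain ⟨U1, U2, hU1o, hU2o, hφ1, hφ2, hdisj⟩ := t2_separation hne
  obtain ⟨f1, hf1, hℓ1⟩ := h1 U1 hU1o hφ1
  obtain ⟨f2, hf2, hℓ2⟩ := h2 U2 hU2o hφ2
  have : f1 * f2 = 0 := hss _ (fun χ => by
    rw [map_mul]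
    by_cases hχ : χ ∈ U1
    · rw [hf2 χ (fun h => Set.disjoint_left.mp hdisj hχ h), mul_zero]
    · rw [hf1 χ hχ, zero_mul])
  exact mul_ne_zero hℓ1 hℓ2 (hsep f1 f2 this)

/-- The support point of a nonzero separating functional. -/
noncomputable def suppPt (hss : IsSemisimple A) (hdit : IsDitkinAlgebra A)
    {ℓ : A →ₗ[ℂ] ℂ} (hℓ : ℓ ≠ 0) : characterSpace ℂ A :=
  (suppSet_nonempty hss hdit hℓ).some

lemma suppPt_mem (hss : IsSemisimple A) (hdit : IsDitkinAlgebra A)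
    {ℓ : A →ₗ[ℂ] ℂ} (hℓ : ℓ ≠ 0) : suppPt hss hdit hℓ ∈ suppSet ℓ :=
  (suppSet_nonempty hss hdit hℓ).some_mem

lemma suppSet_eq_singleton (hss : IsSemisimple A) (hdit : IsDitkinAlgebra A)
    {ℓ : A →ₗ[ℂ] ℂ} (hℓ : ℓ ≠ 0) (hsep : ∀ f g : A, f * g = 0 → ℓ f * ℓ g = 0) :
    suppSet ℓ = {suppPt hss hdit hℓ} :=
  ((suppSet_subsingleton hss hsep).eq_singleton_of_mem (suppPt_mem hss hdit hℓ))

/-- A separating functional kills `J_φ₀` where `φ₀` is its support point. -/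
lemma ell_kill_jset (hss : IsSemisimple A) (hdit : IsDitkinAlgebra A)
    {ℓ : A →ₗ[ℂ] ℂ} (hℓ : ℓ ≠ 0) (hsep : ∀ f g : A, f * g = 0 → ℓ f * ℓ g = 0)
    {f : A} (hf : f ∈ Jset A (suppPt hss hdit hℓ)) : ℓ f = 0 := by
  obtain ⟨V, hVo, hφV, hV⟩ := mem_jset_iff.mp hf
  exact ell_eq_zero_of_vanish_near_supp hss hdit ℓ hVo
    (by rw [suppSet_eq_singleton hss hdit hℓ hsep]; simpa using hφV) hV

end Support

section DisjointOpens

variable {M : Type*} [TopologicalSpace M] [T2Space M] [RegularSpace M]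

lemma disjoint_step {S W : Set M} (hS : S.Infinite) (hW : IsOpen W) (hSW : S ⊆ W) :
    ∃ (x : M) (U W' : Set M), x ∈ S ∧ IsOpen U ∧ x ∈ U ∧ U ⊆ W ∧ IsOpen W' ∧ W' ⊆ W ∧
      Disjoint U W' ∧ (S ∩ W').Infinite := by
  obtain ⟨a, ha, b, hb, hab⟩ := hS.nontrivial
  obtain ⟨Oa, Ob, hOao, hObo, haOa, hbOb, hdisj⟩ := t2_separation hab
  have haW : a ∈ Oa ∩ W := ⟨haOa, hSW ha⟩
  have hbW : b ∈ Ob ∩ W := ⟨hbOb, hSW hb⟩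
  obtain ⟨ta, hta_nhds, hta_closed, hta_sub⟩ :=
    exists_mem_nhds_isClosed_subset ((hOao.inter hW).mem_nhds haW)
  obtain ⟨tb, htb_nhds, htb_closed, htb_sub⟩ :=
    exists_mem_nhds_isClosed_subset ((hObo.inter hW).mem_nhds hbW)
  by_cases hcase : (S \ ta).Infinite
  · refine ⟨a, interior ta, W \ ta, ha, isOpen_interior,
      mem_interior_iff_mem_nhds.mpr hta_nhds,
      fun y hy => (hta_sub (interior_subset hy)).2,
      hW.sdiff hta_closed, Set.diff_subset, ?_, ?_⟩
    · exact Set.disjoint_left.mpr (fun x hx hx2 => hx2.2 (interior_subset hx))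
    · have : S ∩ (W \ ta) = S \ ta := by
        ext x
        constructor
        · rintro ⟨h1, -, h3⟩; exact ⟨h1, h3⟩
        · rintro ⟨h1, h2⟩; exact ⟨h1, hSW h1, h2⟩
      rw [this]; exact hcase
  · rw [Set.not_infinite] at hcase
    have hSta : (S ∩ ta).Infinite := by
      have := hS.diff hcase
      rwa [Set.diff_diff_right_self] at this
    refine ⟨b, interior tb, W \ tb, hb, isOpen_interior,
      mem_interior_iff_mem_nhds.mpr htb_nhds,
      fun y hy => (htb_sub (interior_subset hy)).2,
      hW.sdiff htb_closed, Set.diff_subset, ?_, ?_⟩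
    · exact Set.disjoint_left.mpr (fun x hx hx2 => hx2.2 (interior_subset hx))
    · apply Set.Infinite.mono _ hSta
      rintro x ⟨hxS, hxta⟩
      have hxW : x ∈ W := (hta_sub hxta).2
      have hxtb : x ∉ tb := by
        intro hxtb
        exact Set.disjoint_left.mp hdisj (hta_sub hxta).1 (htb_sub hxtb).1
      exact ⟨hxS, hxW, hxtb⟩

lemma exists_seq_disjoint_opens {S : Set M} (hS : S.Infinite) :
    ∃ (x : ℕ → M) (U : ℕ → Set M), (∀ n, x n ∈ S) ∧ (∀ n, IsOpen (U n)) ∧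
      (∀ n, x n ∈ U n) ∧ ∀ m n, m ≠ n → Disjoint (U m) (U n) := by
  classical
  set St := {p : Set M × Set M // p.1.Infinite ∧ IsOpen p.2 ∧ p.1 ⊆ p.2} with hSt
  have hstep : ∀ s : St, ∃ (x : M) (U : Set M) (s' : St), x ∈ s.1.1 ∧ IsOpen U ∧ x ∈ U ∧
      U ⊆ s.1.2 ∧ s'.1.2 ⊆ s.1.2 ∧ Disjoint U s'.1.2 ∧ s'.1.1 ⊆ s.1.1 := by
    rintro ⟨⟨S0, W0⟩, hS0, hW0, hSW0⟩
    obtain ⟨x, U, W', hxS, hUo, hxU, hUW, hW'o, hW'W, hdisj, hinf⟩ := disjoint_step hS0 hW0 hSW0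
    exact ⟨x, U, ⟨(S0 ∩ W', W'), hinf, hW'o, Set.inter_subset_right⟩, hxS, hUo, hxU, hUW,
      hW'W, hdisj, Set.inter_subset_left⟩
  choose xf Uf nf hmem hUo hxU hUsub hWsub hdisj hSsub using hstep
  set s0 : St := ⟨(S, Set.univ), hS, isOpen_univ, Set.subset_univ S⟩ with hs0
  set seq : ℕ → St := fun n => Nat.rec s0 (fun _ s => nf s) n with hseq
  have hseq_succ : ∀ n, seq (n + 1) = nf (seq n) := fun n => rfl
  have hSsub_all : ∀ n, (seq n).1.1 ⊆ S := by
    intro n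
    induction n with
    | zero => exact subset_rfl
    | succ n ih => exact (hseq_succ n ▸ (hSsub (seq n))).trans ih
  have hWmono : ∀ n m, n ≤ m → (seq m).1.2 ⊆ (seq n).1.2 := by
    intro n m hnm
    induction m with
    | zero => rw [Nat.le_zero.mp hnm]
    | succ m ih =>
      rcases Nat.le_succ_iff_eq_or_le.mp hnm with rfl | h
      · exact subset_rfl
      · exact ((hseq_succ m ▸ hWsub (seq m)) : (seq (m+1)).1.2 ⊆ (seq m).1.2).trans (ih h)
  refine ⟨fun n => xf (seq n), fun n => Uf (seq n), fun n => hSsub_all n (hmem (seq n)),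
    fun n => hUo (seq n), fun n => hxU (seq n), ?_⟩
  have key : ∀ m n, m < n → Disjoint (Uf (seq m)) (Uf (seq n)) := by
    intro m n hmn
    have h1 : Uf (seq n) ⊆ (seq (m+1)).1.2 :=
      (hUsub (seq n)).trans (hWmono (m+1) n hmn)
    have h2 : Disjoint (Uf (seq m)) ((seq (m+1)).1.2) := hseq_succ m ▸ hdisj (seq m)
    exact h2.mono_right h1
  intro m n hmn
  rcases lt_or_gt_of_ne hmn with h | h
  · exact key m n h
  · exact (key n m h).symm

end DisjointOpens

section Transfer

set_option linter.unusedSectionVars false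

variable {A B : Type*} [NormedCommRing A] [NormedAlgebra ℂ A] [CompleteSpace A]
  [NormedCommRing B] [NormedAlgebra ℂ B] [CompleteSpace B]

/-- The functional `τ ∘ T`. -/
noncomputable def ellT (T : A →ₗ[ℂ] B) (τ : characterSpace ℂ B) : A →ₗ[ℂ] ℂ where
  toFun f := τ (T f)
  map_add' f g := by simp only [map_add]
  map_smul' c f := by simp only [map_smul, RingHom.id_apply]

@[simp] lemma ellT_apply (T : A →ₗ[ℂ] B) (τ : characterSpace ℂ B) (f : A) :
    ellT T τ f = τ (T f) := rfl

variable (hAss : IsSemisimple A) (hAdit : IsDitkinAlgebra A)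
  (hBss : IsSemisimple B) (hBdit : IsDitkinAlgebra B)
  (T : A →ₗ[ℂ] B) (hsurj : Function.Surjective T)
  (hsep : ∀ f g : A, f * g = 0 → T f * T g = 0)

include hsurj in
lemma ellT_ne_zero (τ : characterSpace ℂ B) : ellT T τ ≠ 0 := by
  obtain ⟨f1, hf1⟩ := hsurj 1
  intro h
  have : ellT T τ f1 = 0 := by rw [h]; rfl
  rw [ellT_apply, hf1, map_one] at this
  exact one_ne_zero this

include hsep in
lemma ellT_sep (τ : characterSpace ℂ B) :
    ∀ f g : A, f * g = 0 → ellT T τ f * ellT T τ g = 0 := by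
  intro f g hfg
  simp only [ellT_apply]
  rw [← map_mul, hsep f g hfg, map_zero]

/-- The support map `M(B) → M(A)`. -/
noncomputable def hmap (τ : characterSpace ℂ B) : characterSpace ℂ A :=
  suppPt hAss hAdit (ellT_ne_zero T hsurj τ)

include hsep in
lemma hmap_kill {τ : characterSpace ℂ B} {f : A}
    (hf : f ∈ Jset A (hmap hAss hAdit T hsurj τ)) : τ (T f) = 0 :=
  ell_kill_jset hAss hAdit (ellT_ne_zero T hsurj τ) (ellT_sep T hsep τ) hf

/-- `τ ∘ T` is bounded. -/
def GoodChar (T : A →ₗ[ℂ] B) (τ : characterSpace ℂ B) : Prop :=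
  ∃ C : ℝ, ∀ f : A, ‖τ (T f)‖ ≤ C * ‖f‖

lemma jset_mul_subset (φ : characterSpace ℂ A) (a : A) (j : A) (hj : j ∈ Jset A φ) :
    a * j ∈ Jset A φ := by
  filter_upwards [hj] with χ hχ
  rw [map_mul, hχ, mul_zero]

include hsep in
lemma good_formula {τ : characterSpace ℂ B} (hg : GoodChar T τ) (f : A) :
    τ (T f) = τ (T 1) * (hmap hAss hAdit T hsurj τ) f := by
  obtain ⟨C, hC⟩ := hg
  set φ := hmap hAss hAdit T hsurj τ with hφ
  set a := f - (φ f) • 1 with ha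
  have hφa : φ a = 0 := by
    simp [ha, map_sub, map_smul, map_one φ, smul_eq_mul]
  have hcl : a ∈ closure (Jset A φ) := by
    apply closure_mono _ (hAdit φ a hφa)
    rintro y ⟨j, hj, rfl⟩
    exact jset_mul_subset φ a j hj
  set ℓc : A →L[ℂ] ℂ := LinearMap.mkContinuous (ellT T τ) C (by intro x; exact hC x) with hℓc
  have hℓc_apply : ∀ x, ℓc x = τ (T x) := fun x => rfl
  have hker : ∀ j ∈ Jset A φ, ℓc j = 0 := by
    intro j hj
    rw [hℓc_apply]
    exact hmap_kill hAss hAdit T hsurj hsep hj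
  have hℓa : ℓc a = 0 := by
    have h1 : ℓc a ∈ closure (ℓc '' Jset A φ) :=
      (image_closure_subset_closure_image ℓc.continuous) ⟨a, hcl, rfl⟩
    have h2 : closure (ℓc '' Jset A φ) ⊆ {0} := by
      rw [← (isClosed_singleton (x := (0:ℂ))).closure_eq]
      exact closure_mono (by rintro y ⟨j, hj, rfl⟩; exact hker j hj)
    exact h2 h1
  have hTa : τ (T a) = 0 := by rw [← hℓc_apply]; exact hℓa
  rw [ha, map_sub, map_smul, map_sub, map_smul] at hTa
  have h4 : τ (T f) - φ f * τ (T 1) = 0 := by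
    rw [← hTa]
    congr 1
  rw [sub_eq_zero] at h4
  rw [h4]; ring

include hsep in
lemma local_unbounded {τ : characterSpace ℂ B} (hb : ¬ GoodChar T τ)
    {U : Set (characterSpace ℂ A)} (hU : IsOpen U)
    (hφU : hmap hAss hAdit T hsurj τ ∈ U) (C : ℝ) (hCnn : 0 ≤ C) :
    ∃ f : A, (∀ χ, χ ∉ U → χ f = 0) ∧ ‖f‖ ≤ 1 ∧ C < ‖τ (T f)‖ := by
  set φ := hmap hAss hAdit T hsurj τ with hφdef
  obtain ⟨O, hOo, hφO, hcO⟩ := normal_exists_closure_subset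
    (isClosed_singleton (x := φ)) hU (Set.singleton_subset_iff.mpr hφU)
  obtain ⟨u, hu1, V, hVo, hVsub, hVz⟩ :=
    exists_one_on_vanish_near hAdit (isClosed_compl_iff.mpr hU) isClosed_closure
      (Set.disjoint_left.mpr (fun χ hχ hχ2 => hχ (hcO hχ2)))
  have hkey : ∀ f : A, τ (T f) = τ (T (f * u)) := by
    intro f
    have hmem : f - f * u ∈ Jset A φ := by
      apply mem_jset_iff.mpr
      refine ⟨O, hOo, Set.singleton_subset_iff.mp hφO, fun χ hχ => ?_⟩
      rw [map_sub, map_mul, hu1 χ (subset_closure hχ), mul_one, sub_self]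
    have := hmap_kill hAss hAdit T hsurj hsep hmem
    rw [map_sub, map_sub, sub_eq_zero] at this
    exact this
  rw [GoodChar] at hb
  push_neg at hb
  obtain ⟨f0, hf0⟩ := hb (C * (‖u‖ + 1))
  have hf0ne : f0 ≠ 0 := by
    intro h
    rw [h, norm_zero, mul_zero, map_zero, map_zero, norm_zero] at hf0
    exact lt_irrefl 0 hf0
  have hf0pos : (0:ℝ) < ‖f0‖ := norm_pos_iff.mpr hf0ne
  have hupos : (0:ℝ) < ‖u‖ + 1 := by positivity
  set c : ℂ := ((‖f0‖ * (‖u‖ + 1) : ℝ) : ℂ) with hc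
  have hcnorm : ‖c‖ = ‖f0‖ * (‖u‖ + 1) := by
    rw [hc, Complex.norm_real, Real.norm_eq_abs, abs_of_pos (by positivity)]
  have hcne : c ≠ 0 := by
    rw [hc]
    exact_mod_cast (by positivity : (0:ℝ) < ‖f0‖ * (‖u‖+1)).ne'
  refine ⟨c⁻¹ • (f0 * u), ?_, ?_, ?_⟩
  · intro χ hχ
    rw [map_smul, map_mul, hVz χ (hVsub hχ), mul_zero, smul_zero]
  · rw [norm_smul, norm_inv, hcnorm]
    rw [inv_mul_le_iff₀ (by positivity), mul_one]
    calc ‖f0 * u‖ ≤ ‖f0‖ * ‖u‖ := norm_mul_le f0 u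
      _ ≤ ‖f0‖ * (‖u‖ + 1) := by nlinarith
  · rw [map_smul, map_smul]
    have : τ (T (f0 * u)) = τ (T f0) := (hkey f0).symm
    rw [this]
    have : ‖c⁻¹ • τ (T f0)‖ = ‖τ (T f0)‖ / (‖f0‖ * (‖u‖ + 1)) := by
      rw [smul_eq_mul, norm_mul, norm_inv, hcnorm, div_eq_inv_mul]
    rw [this, lt_div_iff₀ (by positivity)]
    calc C * (‖f0‖ * (‖u‖ + 1)) = C * (‖u‖+1) * ‖f0‖ := by ring
      _ < ‖τ (T f0)‖ := hf0

include hsep in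
/-- Gliding hump: the set of supports of unbounded characters is finite. -/
lemma finite_bad_supports :
    {φ : characterSpace ℂ A | ∃ τ : characterSpace ℂ B,
      ¬ GoodChar T τ ∧ hmap hAss hAdit T hsurj τ = φ}.Finite := by
  classical
  by_contra hinf
  rw [← Set.Infinite] at hinf
  obtain ⟨x, U, hxS, hUo, hxU, hdisj⟩ := exists_seq_disjoint_opens hinf
  have hτ : ∀ n, ∃ τ : characterSpace ℂ B, ¬ GoodChar T τ ∧ hmap hAss hAdit T hsurj τ = x n :=
    fun n => hxS n
  choose τ hτbad hτmap using hτ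
  have hf : ∀ n : ℕ, ∃ f : A, (∀ χ, χ ∉ U n → χ f = 0) ∧ ‖f‖ ≤ 1 ∧
      (n : ℝ) * 2^n < ‖τ n (T f)‖ := by
    intro n
    exact local_unbounded hAss hAdit T hsurj hsep (hτbad n) (hUo n)
      ((hτmap n).symm ▸ hxU n) ((n : ℝ) * 2^n) (by positivity)
  choose f0 hf0supp hf0norm hf0big using hf
  set f : ℕ → A := fun n => (((2:ℂ)^n)⁻¹) • f0 n with hfdef
  have h2norm : ∀ n : ℕ, ‖(((2:ℂ)^n)⁻¹)‖ = ((2:ℝ)^n)⁻¹ := by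
    intro n
    rw [norm_inv, norm_pow, Complex.norm_ofNat]
  have hfnorm : ∀ n, ‖f n‖ ≤ (1/2)^n := by
    intro n
    rw [hfdef]
    simp only [norm_smul, h2norm]
    calc ((2:ℝ)^n)⁻¹ * ‖f0 n‖ ≤ (2^n)⁻¹ * 1 := by
          apply mul_le_mul_of_nonneg_left (hf0norm n) (by positivity)
      _ = (1/2)^n := by rw [mul_one, one_div, inv_pow]
  have hsum : Summable f := by
    apply Summable.of_norm_bounded summable_geometric_two
    intro n
    simpa using hfnorm n
  set g : A := ∑' n, f n with hg
  have hgf : ∀ n, g - f n ∈ Jset A (x n) := by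
    intro n
    apply mem_jset_iff.mpr
    refine ⟨U n, hUo n, hxU n, fun χ hχ => ?_⟩
    have hχg : χ g = ∑' m, χ (f m) :=
      (hsum.hasSum.mapL (toStrongDual (χ : WeakDual ℂ A))).tsum_eq.symm
    have : ∑' m, χ (f m) = χ (f n) := by
      apply tsum_eq_single
      intro m hmn
      have hχm : χ ∉ U m := fun hmem =>
        Set.disjoint_left.mp (hdisj m n hmn) hmem hχ
      rw [hfdef]
      simp only
      rw [map_smul, hf0supp m χ hχm, smul_zero]
    rw [map_sub, hχg, this, sub_self]
  have hbound : ∀ n : ℕ, (n:ℝ) * 2^n * ((2:ℝ)^n)⁻¹ ≤ ‖(1:B)‖ * ‖T g‖ := by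
    intro n
    have h1 : τ n (T (g - f n)) = 0 := by
      apply hmap_kill hAss hAdit T hsurj hsep
      rw [hτmap n]
      exact hgf n
    have h2 : τ n (T g) = τ n (T (f n)) := by
      rw [map_sub, map_sub, sub_eq_zero] at h1
      exact h1
    have h3 : ‖τ n (T (f n))‖ = ((2:ℝ)^n)⁻¹ * ‖τ n (T (f0 n))‖ := by
      rw [hfdef]
      simp only
      rw [map_smul, map_smul, norm_smul, h2norm]
    calc (n:ℝ) * 2^n * ((2:ℝ)^n)⁻¹ ≤ ‖τ n (T (f0 n))‖ * ((2:ℝ)^n)⁻¹ := by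
          apply mul_le_mul_of_nonneg_right (le_of_lt (hf0big n)) (by positivity)
      _ = ‖τ n (T (f n))‖ := by rw [h3, mul_comm]
      _ = ‖τ n (T g)‖ := by rw [h2]
      _ ≤ ‖(1:B)‖ * ‖T g‖ := char_norm _ _
  have : ∀ n : ℕ, (n : ℝ) ≤ ‖(1:B)‖ * ‖T g‖ := by
    intro n
    have := hbound n
    rwa [mul_assoc, mul_inv_cancel₀ (by positivity : (2:ℝ)^n ≠ 0), mul_one] at this
  obtain ⟨n, hn⟩ := exists_nat_gt (‖(1:B)‖ * ‖T g‖)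
  exact absurd (this n) (not_le.mpr hn)

include hsep in
lemma bad_not_isolated {τ : characterSpace ℂ B} (hb : ¬ GoodChar T τ) :
    ¬ IsOpen ({hmap hAss hAdit T hsurj τ} : Set (characterSpace ℂ A)) := by
  intro hopen
  apply hb
  set φ := hmap hAss hAdit T hsurj τ with hφdef
  refine ⟨‖(1:A)‖ * ‖τ (T 1)‖, fun f => ?_⟩
  have hmem : f - (φ f) • 1 ∈ Jset A φ := by
    apply mem_jset_iff.mpr
    refine ⟨{φ}, hopen, rfl, fun χ hχ => ?_⟩
    rw [Set.mem_singleton_iff] at hχ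
    subst hχ
    simp [map_sub, map_smul, map_one φ, smul_eq_mul]
  have := hmap_kill hAss hAdit T hsurj hsep hmem
  rw [map_sub, map_smul, map_sub, map_smul, sub_eq_zero] at this
  rw [this]
  calc ‖φ f • τ (T 1)‖ = ‖φ f‖ * ‖τ (T 1)‖ := by rw [smul_eq_mul, norm_mul]
    _ ≤ (‖(1:A)‖ * ‖f‖) * ‖τ (T 1)‖ :=
        mul_le_mul_of_nonneg_right (char_norm φ f) (norm_nonneg _)
    _ = ‖(1:A)‖ * ‖τ (T 1)‖ * ‖f‖ := by ring

include hsep hBss in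
lemma dense_good_image (hinj : Function.Injective T) :
    Dense (hmap hAss hAdit T hsurj '' {τ : characterSpace ℂ B | GoodChar T τ}) := by
  classical
  rw [dense_iff_inter_open]
  rintro V hVo ⟨φv, hφv⟩
  by_contra hemp
  rw [Set.not_nonempty_iff_eq_empty] at hemp
  set BS := {φ : characterSpace ℂ A | ∃ τ : characterSpace ℂ B,
    ¬ GoodChar T τ ∧ hmap hAss hAdit T hsurj τ = φ} with hBS
  have hBSfin : BS.Finite := finite_bad_supports hAss hAdit T hsurj hsep
  have hmap_notin_V : ∀ τ : characterSpace ℂ B, GoodChar T τ →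
      hmap hAss hAdit T hsurj τ ∉ V := by
    intro τ hτ hmem
    rw [Set.eq_empty_iff_forall_notMem] at hemp
    exact hemp _ ⟨hmem, ⟨τ, hτ, rfl⟩⟩
  set V' := V \ BS with hV'
  by_cases hV'emp : V'.Nonempty
  · obtain ⟨φ0, hφ0⟩ := hV'emp
    have hV'o : IsOpen V' := hVo.sdiff (hBSfin.isClosed)
    obtain ⟨a, ha1, W, hWo, hWsub, hWz⟩ :=
      exists_one_at_vanish_near hAdit (isClosed_compl_iff.mpr hV'o)
        (Set.notMem_compl_iff.mpr hφ0)
    have hTa : ∀ τ : characterSpace ℂ B, τ (T a) = 0 := by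
      intro τ
      apply hmap_kill hAss hAdit T hsurj hsep
      apply mem_jset_iff.mpr
      refine ⟨W, hWo, ?_, hWz⟩
      apply hWsub
      by_cases hg : GoodChar T τ
      · exact fun hmem => hmap_notin_V τ hg (Set.diff_subset hmem)
      · exact fun hmem => (Set.mem_diff _ |>.mp hmem).2 ⟨τ, hg, rfl⟩
    have : T a = 0 := hBss _ hTa
    have : a = 0 := hinj (by rw [this, map_zero])
    rw [this, map_zero] at ha1
    exact zero_ne_one ha1
  · rw [Set.not_nonempty_iff_eq_empty] at hV'emp
    have hφvBS : φv ∈ BS := by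
      by_contra h
      have : φv ∈ V' := ⟨hφv, h⟩
      rw [hV'emp] at this
      exact this
    obtain ⟨τ, hτbad, hτφ⟩ := hφvBS
    apply bad_not_isolated hAss hAdit T hsurj hsep hτbad
    rw [hτφ]
    have hsing : {φv} = V \ (BS \ {φv}) := by
      ext ψ
      constructor
      · rintro rfl
        exact ⟨hφv, fun h => h.2 rfl⟩
      · rintro ⟨hψV, hψ⟩
        by_contra hne
        apply hψ
        refine ⟨?_, hne⟩
        by_contra hψBS
        have : ψ ∈ V' := ⟨hψV, hψBS⟩
        rw [hV'emp] at this
        exact this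
    rw [hsing]
    exact hVo.sdiff ((hBSfin.subset Set.diff_subset).isClosed)
end Transfer

section Endgame

set_option linter.unusedSectionVars false

lemma eval_char_continuous {R : Type*} [NormedCommRing R] [NormedAlgebra ℂ R] (r : R) :
    Continuous fun χ : characterSpace ℂ R => χ r :=
  (WeakDual.eval_continuous r).comp continuous_subtype_val

variable {A B : Type*} [NormedCommRing A] [NormedAlgebra ℂ A] [CompleteSpace A]
  [NormedCommRing B] [NormedAlgebra ℂ B] [CompleteSpace B]

/-- The linear inverse of `T`. -/
noncomputable def Tinv (T : A →ₗ[ℂ] B) (hbij : Function.Bijective T) : B →ₗ[ℂ] A :=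
  (LinearEquiv.ofBijective T hbij).symm

lemma Tinv_apply_T (T : A →ₗ[ℂ] B) (hbij : Function.Bijective T) (f : A) :
    Tinv T hbij (T f) = f :=
  (LinearEquiv.ofBijective T hbij).symm_apply_apply f

lemma T_apply_Tinv (T : A →ₗ[ℂ] B) (hbij : Function.Bijective T) (b : B) :
    T (Tinv T hbij b) = b :=
  (LinearEquiv.ofBijective T hbij).apply_symm_apply b

lemma Tinv_bijective (T : A →ₗ[ℂ] B) (hbij : Function.Bijective T) :
    Function.Bijective (Tinv T hbij) :=
  (LinearEquiv.ofBijective T hbij).symm.bijective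

variable (hAss : IsSemisimple A) (hAdit : IsDitkinAlgebra A)
  (hBss : IsSemisimple B) (hBdit : IsDitkinAlgebra B)
  (T : A →ₗ[ℂ] B) (hbij : Function.Bijective T)
  (hsep : ∀ f g : A, f * g = 0 → T f * T g = 0)

include hAss hAdit hBss hBdit hbij hsep

lemma good_T1_ne_zero {τ : characterSpace ℂ B} (hg : GoodChar T τ) : τ (T 1) ≠ 0 := by
  obtain ⟨f1, hf1⟩ := hbij.surjective 1
  intro h0
  have := good_formula hAss hAdit T hbij.surjective hsep hg f1
  rw [hf1, map_one, h0, zero_mul] at this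
  exact one_ne_zero this

/-- The inverse of a separating bijection is separating (on images). -/
lemma inv_separating : ∀ f g : A, T f * T g = 0 → f * g = 0 := by
  intro f1 f2 h0
  have hdense := dense_good_image hAss hAdit hBss T hbij.surjective hsep hbij.injective
  have hzero : ∀ φ ∈ (hmap hAss hAdit T hbij.surjective ''
      {τ : characterSpace ℂ B | GoodChar T τ}), φ (f1 * f2) = 0 := by
    rintro φ ⟨τ, hτg, rfl⟩
    have h1 := good_formula hAss hAdit T hbij.surjective hsep hτg f1
    have h2 := good_formula hAss hAdit T hbij.surjective hsep hτg f2
    have h3 : τ (T f1) * τ (T f2) = 0 := by rw [← map_mul, h0, map_zero]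
    rw [h1, h2] at h3
    have hT1 := good_T1_ne_zero hAss hAdit hBss hBdit T hbij hsep hτg
    rw [map_mul]
    have h4 : τ (T 1) * τ (T 1) *
        ((hmap hAss hAdit T hbij.surjective τ) f1 *
         (hmap hAss hAdit T hbij.surjective τ) f2) = 0 := by rw [← h3]; ring
    rcases mul_eq_zero.mp h4 with h | h
    · exact absurd h (mul_ne_zero hT1 hT1)
    · exact h
  apply hAss
  intro φ
  have : Set.EqOn (fun χ : characterSpace ℂ A => χ (f1 * f2)) (fun _ => 0) Set.univ := by
    rw [← hdense.closure_eq]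
    apply Set.EqOn.closure (fun χ hχ => hzero χ hχ) (eval_char_continuous _) continuous_const
  exact this (Set.mem_univ φ)

lemma Tinv_separating : ∀ b1 b2 : B, b1 * b2 = 0 → Tinv T hbij b1 * Tinv T hbij b2 = 0 := by
  intro b1 b2 h0
  apply inv_separating hAss hAdit hBss hBdit T hbij hsep
  rw [T_apply_Tinv, T_apply_Tinv]
  exact h0

lemma kmap_good (φ : characterSpace ℂ A) (hφ : GoodChar (Tinv T hbij) φ) :
    GoodChar T (hmap hBss hBdit (Tinv T hbij) (Tinv_bijective T hbij).surjective φ) := by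
  set S := Tinv T hbij with hS
  set k := hmap hBss hBdit S (Tinv_bijective T hbij).surjective φ with hk
  have hS1 : φ (S 1) ≠ 0 :=
    good_T1_ne_zero hBss hBdit hAss hAdit S (Tinv_bijective T hbij)
      (Tinv_separating hAss hAdit hBss hBdit T hbij hsep) hφ
  have hform : ∀ b : B, φ (S b) = φ (S 1) * k b := fun b =>
    good_formula hBss hBdit S (Tinv_bijective T hbij).surjective
      (Tinv_separating hAss hAdit hBss hBdit T hbij hsep) hφ b
  refine ⟨‖(1:A)‖ / ‖φ (S 1)‖, fun f => ?_⟩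
  have h1 : φ (S (T f)) = φ (S 1) * k (T f) := hform (T f)
  rw [hS, Tinv_apply_T] at h1
  rw [← hS] at h1
  have h2 : k (T f) = φ f / φ (S 1) := by
    field_simp
    rw [h1]; ring
  rw [h2, norm_div, div_le_iff₀ (norm_pos_iff.mpr hS1), div_mul_eq_mul_div,
    div_mul_eq_mul_div, le_div_iff₀ (norm_pos_iff.mpr hS1)]
  have := char_norm φ f
  nlinarith [norm_nonneg (φ (S 1)), norm_pos_iff.mpr hS1]

lemma dense_goodT : Dense {τ : characterSpace ℂ B | GoodChar T τ} := by
  set S := Tinv T hbij with hS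
  have hd : Dense (hmap hBss hBdit S (Tinv_bijective T hbij).surjective ''
      {φ : characterSpace ℂ A | GoodChar S φ}) :=
    dense_good_image hBss hBdit hAss S (Tinv_bijective T hbij).surjective
      (Tinv_separating hAss hAdit hBss hBdit T hbij hsep) (Tinv_bijective T hbij).injective
  apply Dense.mono _ hd
  rintro τ ⟨φ, hφg, rfl⟩
  exact kmap_good hAss hAdit hBss hBdit T hbij hsep φ hφg

lemma all_good : ∀ τ : characterSpace ℂ B, GoodChar T τ := by
  intro τ0
  by_contra hbad
  set K : ℝ := ‖(1:B)‖ * ‖T 1‖ * ‖(1:A)‖ with hK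
  have hgoodbound : ∀ (f : A) (τ : characterSpace ℂ B), GoodChar T τ →
      ‖τ (T f)‖ ≤ K * ‖f‖ := by
    intro f τ hτ
    rw [good_formula hAss hAdit T hbij.surjective hsep hτ f, norm_mul]
    calc ‖τ (T 1)‖ * ‖(hmap hAss hAdit T hbij.surjective τ) f‖
        ≤ (‖(1:B)‖ * ‖T 1‖) * (‖(1:A)‖ * ‖f‖) :=
          mul_le_mul (char_norm τ (T 1)) (char_norm _ f) (norm_nonneg _)
            (by positivity)
      _ = K * ‖f‖ := by rw [hK]; ring
  have hall : ∀ (f : A) (τ : characterSpace ℂ B), ‖τ (T f)‖ ≤ K * ‖f‖ := by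
    intro f
    have hdense := dense_goodT hAss hAdit hBss hBdit T hbij hsep
    have hclosed : IsClosed {τ : characterSpace ℂ B | ‖τ (T f)‖ ≤ K * ‖f‖} :=
      isClosed_le (Continuous.norm (eval_char_continuous (T f))) continuous_const
    have : Set.univ ⊆ {τ : characterSpace ℂ B | ‖τ (T f)‖ ≤ K * ‖f‖} := by
      rw [← hdense.closure_eq, ← hclosed.closure_eq]
      exact closure_mono (fun τ hτ => hgoodbound f τ hτ)
    exact fun τ => this (Set.mem_univ τ)
  rw [GoodChar] at hbad
  push_neg at hbad
  obtain ⟨f, hf⟩ := hbad K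
  exact absurd (hall f τ0) (not_le.mpr hf)

lemma global_formula : ∀ (τ : characterSpace ℂ B) (f : A),
    τ (T f) = τ (T 1) * (hmap hAss hAdit T hbij.surjective τ) f := fun τ f =>
  good_formula hAss hAdit T hbij.surjective hsep
    (all_good hAss hAdit hBss hBdit T hbij hsep τ) f

lemma T1_ne_zero : ∀ τ : characterSpace ℂ B, τ (T 1) ≠ 0 := fun τ =>
  good_T1_ne_zero hAss hAdit hBss hBdit T hbij hsep
    (all_good hAss hAdit hBss hBdit T hbij hsep τ)

lemma T_continuous : Continuous T := by
  apply LinearMap.continuous_of_seq_closed_graph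
  intro u x y hux huy
  have key : ∀ τ : characterSpace ℂ B, τ y = τ (T x) := by
    intro τ
    have hτc : Continuous (τ : B → ℂ) := by
      exact (toStrongDual ((τ : characterSpace ℂ B) : WeakDual ℂ B)).continuous
    have h1 : Filter.Tendsto (fun n => τ (T (u n))) Filter.atTop (nhds (τ y)) :=
      (hτc.tendsto y).comp huy
    have h2 : Filter.Tendsto (fun n => τ (T (u n))) Filter.atTop (nhds (τ (T x))) := by
      have heq : (fun n => τ (T (u n))) = fun n =>
          τ (T 1) * (hmap hAss hAdit T hbij.surjective τ) (u n) := by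
        funext n
        exact global_formula hAss hAdit hBss hBdit T hbij hsep τ (u n)
      rw [heq, global_formula hAss hAdit hBss hBdit T hbij hsep τ x]
      apply Filter.Tendsto.const_mul
      have hφc : Continuous ((hmap hAss hAdit T hbij.surjective τ : A → ℂ)) :=
        (toStrongDual ((hmap hAss hAdit T hbij.surjective τ :
          characterSpace ℂ A) : WeakDual ℂ A)).continuous
      exact (hφc.tendsto x).comp hux
    exact tendsto_nhds_unique h1 h2
  have h0 : y - T x = 0 := hBss _ (fun τ => by rw [map_sub, key τ, sub_self])
  exact sub_eq_zero.mp h0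

end Endgame

section Homeo

set_option linter.unusedSectionVars false

variable {A B : Type*} [NormedCommRing A] [NormedAlgebra ℂ A] [CompleteSpace A]
  [NormedCommRing B] [NormedAlgebra ℂ B] [CompleteSpace B]
  (hAss : IsSemisimple A) (hAdit : IsDitkinAlgebra A)
  (hBss : IsSemisimple B) (hBdit : IsDitkinAlgebra B)
  (T : A →ₗ[ℂ] B) (hbij : Function.Bijective T)
  (hsep : ∀ f g : A, f * g = 0 → T f * T g = 0)

include hAss hAdit hBss hBdit hbij hsep

lemma hmap_eq_div (τ : characterSpace ℂ B) (f : A) :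
    (hmap hAss hAdit T hbij.surjective τ) f = τ (T f) / τ (T 1) := by
  rw [global_formula hAss hAdit hBss hBdit T hbij hsep τ f]
  field_simp [T1_ne_zero hAss hAdit hBss hBdit T hbij hsep τ]

lemma hmap_injective : Function.Injective (hmap hAss hAdit T hbij.surjective) := by
  intro τ1 τ2 heq
  ext b
  have h1 := hmap_eq_div hAss hAdit hBss hBdit T hbij hsep τ1 (Tinv T hbij b)
  have h2 := hmap_eq_div hAss hAdit hBss hBdit T hbij hsep τ2 (Tinv T hbij b)
  rw [heq] at h1
  rw [T_apply_Tinv] at h1 h2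
  have h1' := h1.symm.trans h2
  -- τ1 b / τ1 (T 1) = τ2 b / τ2 (T 1)
  have hone : τ1 (T 1) = τ2 (T 1) := by
    obtain ⟨f1, hf1⟩ := hbij.surjective 1
    have g1 := global_formula hAss hAdit hBss hBdit T hbij hsep τ1 f1
    have g2 := global_formula hAss hAdit hBss hBdit T hbij hsep τ2 f1
    rw [hf1] at g1 g2
    rw [map_one τ1] at g1
    rw [map_one τ2] at g2
    rw [heq] at g1
    have hx : (hmap hAss hAdit T hbij.surjective τ2) f1 ≠ 0 := by
      intro h
      rw [h, mul_zero] at g1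
      exact one_ne_zero g1
    exact mul_right_cancel₀ hx (g1.symm.trans g2)
  have hn2 := T1_ne_zero hAss hAdit hBss hBdit T hbij hsep τ2
  rw [hone] at h1'
  exact (div_left_inj' hn2).mp h1'

lemma hmap_continuous : Continuous (hmap hAss hAdit T hbij.surjective) := by
  rw [Topology.IsInducing.subtypeVal.continuous_iff]
  apply WeakDual.continuous_of_continuous_eval
  intro f
  have heq : (fun τ : characterSpace ℂ B =>
      ((hmap hAss hAdit T hbij.surjective τ : WeakDual ℂ A)) f) =
      fun τ : characterSpace ℂ B => τ (T f) / τ (T 1) := by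
    funext τ
    exact hmap_eq_div hAss hAdit hBss hBdit T hbij hsep τ f
  have heq2 : (fun a : characterSpace ℂ B =>
      ((Subtype.val ∘ hmap hAss hAdit T hbij.surjective) a) f) =
      fun τ : characterSpace ℂ B => τ (T f) / τ (T 1) := heq
  rw [heq2]
  exact (eval_char_continuous (T f)).div (eval_char_continuous (T 1))
    (T1_ne_zero hAss hAdit hBss hBdit T hbij hsep)

lemma hmap_surjective : Function.Surjective (hmap hAss hAdit T hbij.surjective) := by
  have hdense : Dense (Set.range (hmap hAss hAdit T hbij.surjective)) := by
    apply Dense.mono _ (dense_good_image hAss hAdit hBss T hbij.surjective hsep hbij.injective)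
    rintro φ ⟨τ, -, rfl⟩
    exact Set.mem_range_self τ
  have hclosed : IsClosed (Set.range (hmap hAss hAdit T hbij.surjective)) :=
    (isCompact_range (hmap_continuous hAss hAdit hBss hBdit T hbij hsep)).isClosed
  intro φ
  have : Set.range (hmap hAss hAdit T hbij.surjective) = Set.univ := by
    rw [← hdense.closure_eq, hclosed.closure_eq]
  rw [← Set.mem_range]
  rw [this]
  exact Set.mem_univ φ

lemma char_homeo : Nonempty ((characterSpace ℂ B) ≃ₜ (characterSpace ℂ A)) := by
  refine ⟨Continuous.homeoOfEquivCompactToT2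
    (f := Equiv.ofBijective (hmap hAss hAdit T hbij.surjective)
      ⟨hmap_injective hAss hAdit hBss hBdit T hbij hsep,
       hmap_surjective hAss hAdit hBss hBdit T hbij hsep⟩) ?_⟩
  exact hmap_continuous hAss hAdit hBss hBdit T hbij hsep

/-- Abstract Font-type theorem. -/
theorem font_main :
    Continuous T ∧ (∀ f g : A, T f * T g = 0 → f * g = 0) ∧
      Nonempty ((characterSpace ℂ B) ≃ₜ (characterSpace ℂ A)) :=
  ⟨T_continuous hAss hAdit hBss hBdit T hbij hsep,
   inv_separating hAss hAdit hBss hBdit T hbij hsep,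
   char_homeo hAss hAdit hBss hBdit T hbij hsep⟩

end Homeo

section CXE

set_option linter.unusedSectionVars false

variable {X : Type*} [TopologicalSpace X] [CompactSpace X] [T2Space X]
  {E : Type*} [NormedCommRing E] [NormedAlgebra ℂ E] [CompleteSpace E]

/-- The constant-function algebra homomorphism. -/
def constAH (X : Type*) [TopologicalSpace X] (E : Type*) [NormedCommRing E]
    [NormedAlgebra ℂ E] : E →ₐ[ℂ] C(X, E) where
  toFun := ContinuousMap.const X
  map_one' := rfl
  map_mul' _ _ := rfl
  map_zero' := rfl
  map_add' _ _ := rfl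
  commutes' _ := rfl

/-- Scalar functions embed into `C(X, E)`. -/
noncomputable def iotaAH (X : Type*) [TopologicalSpace X] (E : Type*) [NormedCommRing E]
    [NormedAlgebra ℂ E] : C(X, ℂ) →ₐ[ℂ] C(X, E) where
  toFun g := (⟨algebraMap ℂ E, continuous_algebraMap ℂ E⟩ : C(ℂ, E)).comp g
  map_one' := by ext x; exact map_one (algebraMap ℂ E)
  map_mul' _ _ := by ext x; exact map_mul (algebraMap ℂ E) _ _
  map_zero' := by ext x; exact map_zero (algebraMap ℂ E)
  map_add' _ _ := by ext x; exact map_add (algebraMap ℂ E) _ _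
  commutes' c := by ext x; rfl

@[simp] lemma iotaAH_apply (g : C(X, ℂ)) (x : X) : iotaAH X E g x = algebraMap ℂ E (g x) := rfl

@[simp] lemma constAH_apply (a : E) (x : X) : constAH X E a x = a := rfl

/-- The character of `C(X, E)` given by `f ↦ ψ (f x)`. -/
noncomputable def deltaChar (x : X) (ψ : characterSpace ℂ E) :
    characterSpace ℂ C(X, E) :=
  CharacterSpace.equivAlgHom.symm
    ((CharacterSpace.toAlgHom ψ).comp (ContinuousMap.evalAlgHom ℂ E x))

@[simp] lemma deltaChar_apply (x : X) (ψ : characterSpace ℂ E) (f : C(X, E)) :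
    deltaChar x ψ f = ψ (f x) := by
  rw [deltaChar]
  exact congrFun (CharacterSpace.equivAlgHom_symm_coe _) f

/-- Hausner's theorem: every character of `C(X, E)` is of the form `f ↦ ψ (f x)`. -/
lemma char_exists_rep (φ : characterSpace ℂ C(X, E)) :
    ∃ (x : X) (ψ : characterSpace ℂ E), φ = deltaChar x ψ := by
  -- the induced character on C(X, ℂ)
  set χ : characterSpace ℂ C(X, ℂ) := CharacterSpace.equivAlgHom.symm
    ((CharacterSpace.toAlgHom φ).comp (iotaAH X E)) with hχ
  obtain ⟨x, hx⟩ := (CharacterSpace.homeoEval X ℂ).surjective χ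
  have hχg : ∀ g : C(X, ℂ), φ (iotaAH X E g) = g x := by
    intro g
    have h1 : χ g = φ (iotaAH X E g) := congrFun (CharacterSpace.equivAlgHom_symm_coe _) g
    have h2 : χ g = g x := by
      rw [← hx]
      exact CharacterSpace.continuousMapEval_apply_apply X ℂ x g
    rw [← h1, h2]
  -- the induced character on E
  set ψ : characterSpace ℂ E := CharacterSpace.equivAlgHom.symm
    ((CharacterSpace.toAlgHom φ).comp (constAH X E)) with hψ
  have hψa : ∀ a : E, ψ a = φ (constAH X E a) := fun a =>
    congrFun (CharacterSpace.equivAlgHom_symm_coe _) a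
  -- vanishing principle
  have hkey : ∀ f : C(X, E), f x = 0 → φ f = 0 := by
    intro f hfx
    have hbound : ∀ ε : ℝ, 0 < ε → ‖φ f‖ ≤ ‖(1 : C(X, E))‖ * ε := by
      intro ε hε
      set U : Set X := {x' | ‖f x'‖ < ε} with hU
      have hUo : IsOpen U := by
        have : Continuous fun x' => ‖f x'‖ := f.continuous.norm
        exact isOpen_lt this continuous_const
      have hxU : x ∈ U := by
        simp only [hU, Set.mem_setOf_eq, hfx, norm_zero]
        exact hε
      obtain ⟨g, hg0, hg1, hg01⟩ := exists_continuous_zero_one_of_isClosed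
        (isClosed_singleton (x := x)) (isClosed_compl_iff.mpr hUo)
        (by simp [Set.disjoint_left, hxU])
      set gC : C(X, ℂ) := (⟨Complex.ofReal, Complex.continuous_ofReal⟩ : C(ℝ, ℂ)).comp g
        with hgC
      have hsplit : φ f = φ (f * iotaAH X E gC) + φ (f * (1 - iotaAH X E gC)) := by
        rw [← map_add]
        congr 1
        ring
      have h1 : φ (f * iotaAH X E gC) = 0 := by
        rw [map_mul]
        have : φ (iotaAH X E gC) = gC x := hχg gC
        have hgx : gC x = 0 := by
          simp only [hgC, ContinuousMap.comp_apply, ContinuousMap.coe_mk]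
          rw [hg0 (Set.mem_singleton x)]
          simp
        rw [this, hgx, mul_zero]
      have h2 : ‖f * (1 - iotaAH X E gC)‖ ≤ ε := by
        apply (ContinuousMap.norm_le _ (le_of_lt hε)).mpr
        intro x'
        have hval : (f * (1 - iotaAH X E gC)) x' = (1 - (g x' : ℂ)) • f x' := by
          simp only [ContinuousMap.mul_apply, ContinuousMap.sub_apply, ContinuousMap.one_apply,
            iotaAH_apply]
          have heq : (1 : E) - algebraMap ℂ E (gC x') = algebraMap ℂ E (1 - gC x') := by
            rw [map_sub, map_one]
          rw [heq, mul_comm, ← Algebra.smul_def]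
          congr 1
        rw [hval, norm_smul]
        by_cases hx' : x' ∈ U
        · have hg01' := hg01 x'
          have : ‖(1 : ℂ) - (g x' : ℂ)‖ ≤ 1 := by
            rw [← Complex.ofReal_one, ← Complex.ofReal_sub, Complex.norm_real]
            rw [Real.norm_eq_abs, abs_of_nonneg (by linarith [hg01'.2])]
            linarith [hg01'.1]
          calc ‖(1:ℂ) - (g x' : ℂ)‖ * ‖f x'‖ ≤ 1 * ‖f x'‖ :=
                mul_le_mul_of_nonneg_right this (norm_nonneg _)
            _ = ‖f x'‖ := one_mul _
            _ ≤ ε := le_of_lt hx'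
        · have : g x' = 1 := hg1 hx'
          rw [this]
          simp only [Complex.ofReal_one, sub_self, norm_zero, zero_mul]
          exact le_of_lt hε
      calc ‖φ f‖ = ‖φ (f * (1 - iotaAH X E gC))‖ := by rw [hsplit, h1, zero_add]
        _ ≤ ‖(1 : C(X, E))‖ * ‖f * (1 - iotaAH X E gC)‖ := char_norm φ _
        _ ≤ ‖(1 : C(X, E))‖ * ε := mul_le_mul_of_nonneg_left h2 (norm_nonneg _)
    have : ‖φ f‖ ≤ 0 := by
      by_contra hpos
      push_neg at hpos
      rcases eq_or_lt_of_le (norm_nonneg (1 : C(X,E))) with h1 | h1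
      · have := hbound 1 one_pos
        rw [← h1, zero_mul] at this
        exact absurd this (not_le.mpr hpos)
      · have := hbound (‖φ f‖ / (2 * ‖(1 : C(X,E))‖)) (by positivity)
        have h2 : ‖(1 : C(X,E))‖ * (‖φ f‖ / (2 * ‖(1 : C(X,E))‖)) = ‖φ f‖ / 2 := by
          field_simp
        rw [h2] at this
        linarith
    have := le_antisymm this (norm_nonneg _)
    rwa [norm_eq_zero] at this
  refine ⟨x, ψ, ?_⟩
  ext f
  rw [deltaChar_apply]
  have hdiff : φ (f - constAH X E (f x)) = 0 := by
    apply hkey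
    simp
  rw [map_sub] at hdiff
  rw [sub_eq_zero] at hdiff
  rw [hdiff, hψa]

end CXE

section CXE2

set_option linter.unusedSectionVars false

variable {X : Type*} [TopologicalSpace X] [CompactSpace X] [T2Space X]
  {E : Type*} [NormedCommRing E] [NormedAlgebra ℂ E] [CompleteSpace E]

lemma deltaChar_injective :
    Function.Injective (fun p : X × characterSpace ℂ E => deltaChar p.1 p.2) := by
  rintro ⟨x1, ψ1⟩ ⟨x2, ψ2⟩ heq
  simp only at heq
  have hx : x1 = x2 := by
    by_contra hne
    obtain ⟨g, hg0, hg1, -⟩ := exists_continuous_zero_one_of_isClosed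
      (isClosed_singleton (x := x1)) (isClosed_singleton (x := x2))
      (by simp [Set.disjoint_left, hne])
    set gC : C(X, ℂ) := (⟨Complex.ofReal, Complex.continuous_ofReal⟩ : C(ℝ, ℂ)).comp g
    have h1 : deltaChar x1 ψ1 (iotaAH X E gC) = 0 := by
      rw [deltaChar_apply, iotaAH_apply]
      have : gC x1 = 0 := by
        simp only [gC, ContinuousMap.comp_apply, ContinuousMap.coe_mk]
        rw [hg0 (Set.mem_singleton x1)]; simp
      rw [this, map_zero, map_zero]
    have h2 : deltaChar x2 ψ2 (iotaAH X E gC) = 1 := by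
      rw [deltaChar_apply, iotaAH_apply]
      have : gC x2 = 1 := by
        simp only [gC, ContinuousMap.comp_apply, ContinuousMap.coe_mk]
        rw [hg1 (Set.mem_singleton x2)]; simp
      rw [this, map_one, map_one]
    rw [heq, h2] at h1
    exact one_ne_zero h1
  subst hx
  have hψ : ψ1 = ψ2 := by
    ext a
    have := congrFun (congrArg (fun c : characterSpace ℂ C(X,E) => (c : C(X,E) → ℂ))
      heq) (constAH X E a)
    simpa [deltaChar_apply] using this
  rw [hψ]

lemma deltaChar_continuous :
    Continuous (fun p : X × characterSpace ℂ E => deltaChar p.1 p.2) := by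
  rw [Topology.IsInducing.subtypeVal.continuous_iff]
  apply WeakDual.continuous_of_continuous_eval
  intro f
  have heq : (fun p : X × characterSpace ℂ E =>
      ((Subtype.val ∘ fun p : X × characterSpace ℂ E => deltaChar p.1 p.2) p) f) =
      fun p : X × characterSpace ℂ E => p.2 (f p.1) := by
    funext p
    exact deltaChar_apply p.1 p.2 f
  rw [heq]
  apply continuous_iff_continuousAt.mpr
  rintro ⟨x0, ψ0⟩
  rw [ContinuousAt, Metric.tendsto_nhds]
  intro ε hε
  set C : ℝ := ‖(1:E)‖ with hC
  have hCnn : 0 ≤ C := norm_nonneg _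
  have hev1 : ∀ᶠ p : X × characterSpace ℂ E in nhds (x0, ψ0),
      ‖f p.1 - f x0‖ < ε / (2 * (C + 1)) := by
    have hcont : Continuous fun p : X × characterSpace ℂ E => ‖f p.1 - f x0‖ :=
      ((f.continuous.comp continuous_fst).sub continuous_const).norm
    have hop : IsOpen {p : X × characterSpace ℂ E | ‖f p.1 - f x0‖ < ε / (2 * (C + 1))} :=
      isOpen_lt hcont continuous_const
    apply hop.eventually_mem
    simp only [Set.mem_setOf_eq, sub_self, norm_zero]
    positivity
  have hev2 : ∀ᶠ p : X × characterSpace ℂ E in nhds (x0, ψ0),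
      ‖p.2 (f x0) - ψ0 (f x0)‖ < ε / 2 := by
    have hcont : Continuous fun p : X × characterSpace ℂ E => ‖p.2 (f x0) - ψ0 (f x0)‖ :=
      (((eval_char_continuous (f x0)).comp continuous_snd).sub continuous_const).norm
    have hop : IsOpen {p : X × characterSpace ℂ E | ‖p.2 (f x0) - ψ0 (f x0)‖ < ε / 2} :=
      isOpen_lt hcont continuous_const
    apply hop.eventually_mem
    simp only [Set.mem_setOf_eq, sub_self, norm_zero]
    positivity
  filter_upwards [hev1, hev2] with p h1 h2
  rw [dist_eq_norm]
  have hsplit : p.2 (f p.1) - ψ0 (f x0) =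
      (p.2 (f p.1) - p.2 (f x0)) + (p.2 (f x0) - ψ0 (f x0)) := by ring
  calc ‖p.2 (f p.1) - ψ0 (f x0)‖
      ≤ ‖p.2 (f p.1) - p.2 (f x0)‖ + ‖p.2 (f x0) - ψ0 (f x0)‖ := by
        rw [hsplit]; exact norm_add_le _ _
    _ ≤ C * ‖f p.1 - f x0‖ + ‖p.2 (f x0) - ψ0 (f x0)‖ := by
        have : p.2 (f p.1) - p.2 (f x0) = p.2 (f p.1 - f x0) := (map_sub _ _ _).symm
        rw [this]
        exact add_le_add_left (char_norm p.2 _) _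
    _ < C * (ε / (2 * (C+1))) + ε/2 := by
        apply add_lt_add_of_le_of_lt _ h2
        by_cases hC0 : C = 0
        · rw [hC0, zero_mul, zero_mul]
        · apply le_of_lt
          apply mul_lt_mul_of_pos_left h1
          exact lt_of_le_of_ne hCnn (Ne.symm hC0)
    _ ≤ ε/2 + ε/2 := by
        apply add_le_add_left
        rw [mul_div_assoc']
        rw [div_le_div_iff₀ (by positivity) (by positivity)]
        nlinarith
    _ = ε := by ring

/-- The Hausner homeomorphism `X × M(E) ≃ₜ M(C(X, E))`. -/
noncomputable def hausnerHomeo (X : Type*) [TopologicalSpace X] [CompactSpace X] [T2Space X]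
    (E : Type*) [NormedCommRing E] [NormedAlgebra ℂ E] [CompleteSpace E] :
    (X × characterSpace ℂ E) ≃ₜ characterSpace ℂ C(X, E) :=
  Continuous.homeoOfEquivCompactToT2
    (f := Equiv.ofBijective (fun p : X × characterSpace ℂ E => deltaChar p.1 p.2)
      ⟨deltaChar_injective, fun φ => by
        obtain ⟨x, ψ, rfl⟩ := char_exists_rep φ
        exact ⟨(x, ψ), rfl⟩⟩)
    deltaChar_continuous

lemma hausnerHomeo_apply (p : X × characterSpace ℂ E) :
    hausnerHomeo X E p = deltaChar p.1 p.2 := rfl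

lemma cxe_semisimple (hEss : IsSemisimple E) : IsSemisimple C(X, E) := by
  intro f hf
  ext x
  rw [ContinuousMap.zero_apply]
  apply hEss
  intro ψ
  have := hf (deltaChar x ψ)
  rwa [deltaChar_apply] at this

lemma cxe_ditkin (hE : IsDitkinAlgebra E) : IsDitkinAlgebra C(X, E) := by
  intro φ f hφf
  obtain ⟨x, ψ, rfl⟩ := char_exists_rep φ
  rw [deltaChar_apply] at hφf
  rw [Metric.mem_closure_iff]
  intro ε hε
  obtain ⟨y, hy, hdist⟩ := Metric.mem_closure_iff.mp (hE ψ (f x) hφf) (ε/3) (by positivity)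
  obtain ⟨e, he, rfl⟩ := hy
  obtain ⟨W, hWo, hψW, hWz⟩ := mem_jset_iff.mp he
  rw [dist_eq_norm] at hdist
  set U : Set X := {x' | ‖f x' - f x‖ < ε / (3 * (‖e‖ + 1))} with hU
  have hUo : IsOpen U := isOpen_lt ((f.continuous.sub continuous_const).norm) continuous_const
  have hxU : x ∈ U := by
    simp only [hU, Set.mem_setOf_eq, sub_self, norm_zero]
    positivity
  obtain ⟨O, hOo, hxO, hcO⟩ := normal_exists_closure_subset
    (isClosed_singleton (x := x)) hUo (Set.singleton_subset_iff.mpr hxU)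
  obtain ⟨g, hg0, hg1, hg01⟩ := exists_continuous_zero_one_of_isClosed
    isClosed_closure (isClosed_compl_iff.mpr hUo)
    (Set.disjoint_left.mpr (fun x' hx' hx'2 => hx'2 (hcO hx')))
  set gC : C(X, ℂ) := (⟨Complex.ofReal, Complex.continuous_ofReal⟩ : C(ℝ, ℂ)).comp g with hgC
  set u : C(X, E) := iotaAH X E gC + (1 - iotaAH X E gC) * constAH X E e with hu
  have hu_mem : u ∈ Jset C(X, E) (deltaChar x ψ) := by
    apply mem_jset_iff.mpr
    refine ⟨(fun p : X × characterSpace ℂ E => deltaChar p.1 p.2) '' (O ×ˢ W), ?_, ?_, ?_⟩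
    · have : (fun p : X × characterSpace ℂ E => deltaChar p.1 p.2) '' (O ×ˢ W) =
          (hausnerHomeo X E) '' (O ×ˢ W) := rfl
      rw [this]
      exact (Homeomorph.isOpen_image _).mpr (hOo.prod hWo)
    · exact ⟨(x, ψ), ⟨Set.singleton_subset_iff.mp hxO, hψW⟩, rfl⟩
    · rintro χ ⟨⟨x', ψ'⟩, ⟨hx'O, hψ'W⟩, rfl⟩
      simp only [deltaChar_apply]
      have hgx' : gC x' = 0 := by
        simp only [hgC, ContinuousMap.comp_apply, ContinuousMap.coe_mk]
        rw [hg0 (subset_closure hx'O)]; simp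
      have hux' : u x' = (1 - algebraMap ℂ E (gC x')) * e + algebraMap ℂ E (gC x') := by
        simp only [hu, ContinuousMap.add_apply, ContinuousMap.mul_apply,
          ContinuousMap.sub_apply, ContinuousMap.one_apply, iotaAH_apply, constAH_apply]
        ring
      rw [hux', hgx']
      simp only [map_zero, sub_zero, one_mul, map_add, map_mul, map_one]
      rw [hWz ψ' hψ'W]
      simp
  refine ⟨f * u, ⟨u, hu_mem, rfl⟩, ?_⟩
  rw [dist_eq_norm]
  have hb : ‖f - f * u‖ ≤ 2*ε/3 := by
    apply (ContinuousMap.norm_le _ (by positivity)).mpr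
    intro x'
    have hval : (f - f * u) x' = (1 - gC x') • (f x' - f x' * e) := by
      simp only [ContinuousMap.sub_apply, ContinuousMap.mul_apply, hu,
        ContinuousMap.add_apply, ContinuousMap.one_apply, iotaAH_apply, constAH_apply]
      rw [Algebra.smul_def, map_sub, map_one]
      ring
    rw [hval, norm_smul]
    by_cases hx' : x' ∈ U
    · have hg01' := hg01 x'
      have hgb : ‖(1:ℂ) - gC x'‖ ≤ 1 := by
        simp only [hgC, ContinuousMap.comp_apply, ContinuousMap.coe_mk]
        rw [← Complex.ofReal_one, ← Complex.ofReal_sub, Complex.norm_real]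
        rw [Real.norm_eq_abs, abs_of_nonneg (by linarith [hg01'.2])]
        linarith [hg01'.1]
      have hfb : ‖f x' - f x' * e‖ ≤ 2*ε/3 := by
        have hdecomp : f x' - f x' * e =
            (f x' - f x) + (f x - f x * e) + (f x - f x') * e := by ring
        have hδ : ‖f x' - f x‖ < ε / (3 * (‖e‖ + 1)) := hx'
        calc ‖f x' - f x' * e‖ ≤ ‖f x' - f x‖ + ‖f x - f x * e‖ + ‖(f x - f x') * e‖ := by
              rw [hdecomp]
              exact (norm_add_le _ _).trans (add_le_add_left (norm_add_le _ _) _)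
          _ ≤ ‖f x' - f x‖ + ‖f x - f x * e‖ + ‖f x - f x'‖ * ‖e‖ :=
              add_le_add_right (norm_mul_le _ _) _
          _ ≤ ε / (3 * (‖e‖ + 1)) * (1 + ‖e‖) + ε/3 := by
              rw [norm_sub_rev (f x) (f x')]
              nlinarith [norm_nonneg e, hδ, hdist, norm_nonneg (f x' - f x)]
          _ ≤ ε/3 + ε/3 := by
              apply add_le_add_left
              rw [div_mul_eq_mul_div, div_le_div_iff₀ (by positivity) (by positivity)]
              nlinarith [norm_nonneg e]
          _ = 2*ε/3 := by ring
      calc ‖(1:ℂ) - gC x'‖ * ‖f x' - f x' * e‖ ≤ 1 * (2*ε/3) :=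
            mul_le_mul hgb hfb (norm_nonneg _) zero_le_one
        _ = 2*ε/3 := one_mul _
    · have : g x' = 1 := hg1 hx'
      have : gC x' = 1 := by
        simp only [hgC, ContinuousMap.comp_apply, ContinuousMap.coe_mk, this]
        simp
      rw [this]
      simp only [sub_self, norm_zero, zero_mul]
      positivity
  linarith

end CXE2


variable {X : Type*} [TopologicalSpace X] [CompactSpace X] [T2Space X]
  {E : Type*} [NormedCommRing E] [NormedAlgebra ℂ E] [CompleteSpace E]
  {B : Type*} [NormedCommRing B] [NormedAlgebra ℂ B] [CompleteSpace B]
  {Bt : Type*} [NormedCommRing Bt] [NormedAlgebra ℂ Bt] [CompleteSpace Bt]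

/-- Let `X, Y` be (nonempty) compact Hausdorff spaces, `E, F` unital
commutative semisimple Banach algebras that are Ditkin algebras, and
`T : C(X, E) → C(Y, F)` a separating linear bijection. Then `T` is continuous, `T⁻¹` is
separating, and `X × M(E)` is homeomorphic to `Y × M(F)`. -/
theorem separating_linear_bijection_continuousMap
    (X : Type*) [TopologicalSpace X] [CompactSpace X] [T2Space X] [Nonempty X]
    (Y : Type*) [TopologicalSpace Y] [CompactSpace Y] [T2Space Y] [Nonempty Y]
    (E : Type*) [NormedCommRing E] [NormedAlgebra ℂ E] [CompleteSpace E]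
    (F : Type*) [NormedCommRing F] [NormedAlgebra ℂ F] [CompleteSpace F]
    (hEss : IsSemisimple E) (hFss : IsSemisimple F)
    (hE : IsDitkinAlgebra E) (hF : IsDitkinAlgebra F)
    (T : C(X, E) →ₗ[ℂ] C(Y, F)) (hbij : Function.Bijective T)
    (hsep : ∀ f g : C(X, E), f * g = 0 → T f * T g = 0) :
    Continuous T ∧
    (∀ f g : C(X, E), T f * T g = 0 → f * g = 0) ∧
    Nonempty ((X × characterSpace ℂ E) ≃ₜ (Y × characterSpace ℂ F)) := by
  obtain ⟨hcont, hinv, ⟨homeo⟩⟩ := font_main (cxe_semisimple hEss) (cxe_ditkin hE)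
    (cxe_semisimple hFss) (cxe_ditkin hF) T hbij hsep
  exact ⟨hcont, hinv,
    ⟨(hausnerHomeo X E).trans (homeo.symm.trans (hausnerHomeo Y F).symm)⟩⟩
end
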